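/- arXiv:1111.6555 — 5 statements merged into one kernel-verified Lean document; each statement's English description precedes it below -/
import Mathlib

section
/- Let F be a finite-dimensional real vector space, let C ⊆ F be an acute closed convex cone, let L ⊆ F be a linear subspace of codimension 1, and let φ : L → ℝ be a linear functional such that φ(l) > 0 for every l ∈ L ∩ C with l ≠ 0. Then there exists a linear functional Φ : F → ℝ extending φ such that Φ(x) > 0 for every x ∈ C with x ≠ 0. -/
/-- Let `F` be a finite-dimensional real vector space, `C ⊆ F` an acute
closed convex cone, `L ⊆ F` a linear subspace of codimension 1, and `φ : L → ℝ` a linear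
functional such that `φ l > 0` for every `l ∈ L ∩ C` with `l ≠ 0`. Then there is a linear
extension `Φ : F → ℝ` of `φ` with `Φ x > 0` for every `x ∈ C` with `x ≠ 0`.
A convex cone `C` is acute if `C ∩ (-C) = {0}`. -/
theorem stmt_0 {F : Type*} [NormedAddCommGroup F] [NormedSpace ℝ F]
    [FiniteDimensional ℝ F]
    (C : Set F) (hC_closed : IsClosed C)
    (hC_add : ∀ x ∈ C, ∀ y ∈ C, x + y ∈ C)
    (hC_smul : ∀ (c : ℝ), 0 ≤ c → ∀ x ∈ C, c • x ∈ C)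
    (hC_acute : C ∩ (-C) = {0})
    (L : Submodule ℝ F) (hL : Module.finrank ℝ (F ⧸ L) = 1)
    (φ : L →ₗ[ℝ] ℝ)
    (hφ : ∀ l : L, (l : F) ∈ C → (l : F) ≠ 0 → 0 < φ l) :
    ∃ Φ : F →ₗ[ℝ] ℝ, (∀ l : L, Φ l = φ l) ∧ ∀ x ∈ C, x ≠ 0 → 0 < Φ x := by
  classical
  have hacute : ∀ x ∈ C, -x ∈ C → x = 0 := by
    intro x hx hnx
    have hmem : x ∈ C ∩ (-C) := ⟨hx, by simpa [Set.mem_neg] using hnx⟩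
    rw [hC_acute] at hmem
    exact hmem
  -- construct π with kernel L
  have hquot : Module.finrank ℝ (F ⧸ L) = Module.finrank ℝ ℝ := by simp [hL]
  let ψ : (F ⧸ L) ≃ₗ[ℝ] ℝ := LinearEquiv.ofFinrankEq _ _ hquot
  let π : F →ₗ[ℝ] ℝ := ψ.toLinearMap ∘ₗ L.mkQ
  have hker : LinearMap.ker π = L := by
    rw [LinearMap.ker_comp, LinearEquiv.ker, Submodule.comap_bot, Submodule.ker_mkQ]
  have hsurj : Function.Surjective π := ψ.surjective.comp (Submodule.mkQ_surjective L)
  obtain ⟨e, he⟩ := hsurj 1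
  have hπL : ∀ x : F, π x = 0 → x ∈ L := fun x hx => hker ▸ (LinearMap.mem_ker.mpr hx)
  have hLπ : ∀ x : F, x ∈ L → π x = 0 := fun x hx =>
    LinearMap.mem_ker.mp (hker ▸ hx : x ∈ LinearMap.ker π)
  -- projection onto L
  have hmem : ∀ x : F, ((LinearMap.id : F →ₗ[ℝ] F) - π.smulRight e) x ∈ L := by
    intro x
    apply hπL
    simp [LinearMap.sub_apply, LinearMap.smulRight_apply, map_sub, map_smul, he,
      smul_eq_mul]
  let P : F →ₗ[ℝ] L :=
    LinearMap.codRestrict L ((LinearMap.id : F →ₗ[ℝ] F) - π.smulRight e) hmem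
  let fL : F →ₗ[ℝ] ℝ := φ ∘ₗ P
  have hfL : ∀ l : L, fL l = φ l := by
    intro l
    show φ (P (l : F)) = φ l
    congr 1
    ext
    simp [P, hLπ (l : F) l.2]
  have hposL : ∀ x ∈ C, π x = 0 → x ≠ 0 → 0 < fL x := by
    intro x hxC hx0 hxne
    have hxL : x ∈ L := hπL x hx0
    have h1 : fL x = φ ⟨x, hxL⟩ := hfL ⟨x, hxL⟩
    rw [h1]
    exact hφ ⟨x, hxL⟩ hxC hxne
  have hfc : Continuous fL := fL.continuous_of_finiteDimensional
  have hπc : Continuous π := π.continuous_of_finiteDimensional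
  set K : Set F := C ∩ Metric.sphere (0 : F) 1 with hKdef
  have hKcomp : IsCompact K := (isCompact_sphere (0 : F) 1).inter_left hC_closed
  -- Claim E : uniform positivity of fL near the slice π = 0 on K
  obtain ⟨ε, hε, hE⟩ : ∃ ε > 0, ∀ u ∈ K, |π u| < ε → ε ≤ fL u := by
    rcases K.eq_empty_or_nonempty with hemp | hne
    · exact ⟨1, one_pos, by simp [hemp]⟩
    · have hcont : ContinuousOn (fun x => max |π x| (fL x)) K :=
        ((hπc.abs).max hfc).continuousOn
      obtain ⟨x₀, hx₀K, hx₀min⟩ := hKcomp.exists_isMinOn hne hcont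
      have hx₀ne : x₀ ≠ 0 := by
        have := hx₀K.2
        simp only [Metric.mem_sphere, dist_zero_right] at this
        intro h; rw [h] at this; simp at this
      have hc : 0 < max |π x₀| (fL x₀) := by
        rcases eq_or_ne (π x₀) 0 with h | h
        · exact lt_of_lt_of_le (hposL x₀ hx₀K.1 h hx₀ne) (le_max_right _ _)
        · exact lt_of_lt_of_le (abs_pos.mpr h) (le_max_left _ _)
      refine ⟨max |π x₀| (fL x₀) / 2, by linarith, ?_⟩
      intro u huK hu
      have h1 : max |π x₀| (fL x₀) ≤ max |π u| (fL u) := hx₀min huK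
      have h2 : max |π x₀| (fL x₀) ≤ fL u :=
        (le_max_iff.mp h1).resolve_left (by linarith)
      linarith
  -- attainment of the minimum of fL on slices
  have hmin : ∀ s : ℝ, |s| = 1 → ∀ y₀ ∈ C, π y₀ = s →
      ∃ y', y' ∈ C ∧ π y' = s ∧ ∀ y ∈ C, π y = s → fL y' ≤ fL y := by
    intro s hs y₀ hy₀C hy₀π
    set R : ℝ := 1/ε + |fL y₀|/ε + ‖y₀‖ with hR
    set Q : Set F := (C ∩ π ⁻¹' {s}) ∩ Metric.closedBall 0 R with hQ
    have hQc : IsCompact Q :=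
      (isCompact_closedBall (0 : F) R).inter_left
        (hC_closed.inter (isClosed_singleton.preimage hπc))
    have hy₀Q : y₀ ∈ Q := by
      refine ⟨⟨hy₀C, hy₀π⟩, ?_⟩
      rw [Metric.mem_closedBall, dist_zero_right, hR]
      have h1 : 0 ≤ 1/ε := by positivity
      have h2 : 0 ≤ |fL y₀|/ε := by positivity
      linarith
    obtain ⟨y', hy'Q, hy'minQ⟩ := hQc.exists_isMinOn ⟨y₀, hy₀Q⟩ hfc.continuousOn
    have hy'min : ∀ y ∈ Q, fL y' ≤ fL y := fun y hy => hy'minQ hy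
    refine ⟨y', hy'Q.1.1, hy'Q.1.2, ?_⟩
    intro y hyC hyπ
    rcases le_or_gt ‖y‖ R with hle | hgt
    · exact hy'min y ⟨⟨hyC, hyπ⟩, by rwa [Metric.mem_closedBall, dist_zero_right]⟩
    · have hsne : s ≠ 0 := by intro h; rw [h] at hs; simp at hs
      have hy0 : y ≠ 0 := by
        intro h; rw [h] at hyπ; simp at hyπ; exact hsne hyπ.symm
      have hny : 0 < ‖y‖ := norm_pos_iff.mpr hy0
      have huC : ‖y‖⁻¹ • y ∈ C := hC_smul _ (by positivity) y hyC
      have huK : ‖y‖⁻¹ • y ∈ K := by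
        refine ⟨huC, ?_⟩
        simp [norm_smul, abs_of_pos (inv_pos.mpr hny), inv_mul_cancel₀ hny.ne']
      have hπu : |π (‖y‖⁻¹ • y)| = ‖y‖⁻¹ := by
        rw [map_smul, smul_eq_mul, hyπ, abs_mul, hs, mul_one,
          abs_of_pos (inv_pos.mpr hny)]
      have h1R : 1/ε ≤ R := by
        have h2 : 0 ≤ |fL y₀|/ε := by positivity
        have h3 : 0 ≤ ‖y₀‖ := norm_nonneg _
        rw [hR]; linarith
      have hεy : ‖y‖⁻¹ < ε := by
        rw [inv_lt_comm₀ hny hε]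
        calc ε⁻¹ = 1/ε := (one_div ε).symm
          _ ≤ R := h1R
          _ < ‖y‖ := hgt
      have hfu : ε ≤ fL (‖y‖⁻¹ • y) := hE _ huK (by rw [hπu]; exact hεy)
      have hfy : fL y = ‖y‖ * fL (‖y‖⁻¹ • y) := by
        rw [map_smul, smul_eq_mul, ← mul_assoc, mul_inv_cancel₀ hny.ne', one_mul]
      have hy'le : fL y' ≤ fL y₀ := hy'min y₀ hy₀Q
      have habs : fL y₀ ≤ |fL y₀| := le_abs_self _
      have hRε : |fL y₀| ≤ R * ε := by
        have : |fL y₀| / ε ≤ R := by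
          have h2 : 0 ≤ 1/ε := by positivity
          have h3 : 0 ≤ ‖y₀‖ := norm_nonneg _
          rw [hR]; linarith
        calc |fL y₀| = (|fL y₀| / ε) * ε := by field_simp
          _ ≤ R * ε := by nlinarith
      have : R * ε ≤ fL y := by
        calc R * ε ≤ ‖y‖ * ε := by nlinarith
          _ ≤ ‖y‖ * fL (‖y‖⁻¹ • y) := by nlinarith
          _ = fL y := hfy.symm
      linarith
  -- choose t
  obtain ⟨t, ht1, ht2⟩ : ∃ t : ℝ, (∀ y ∈ C, π y = 1 → -t < fL y) ∧
      (∀ z ∈ C, π z = -1 → t < fL z) := by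
    by_cases h1 : ∃ y, y ∈ C ∧ π y = 1
    · obtain ⟨y₀, hy₀C, hy₀π⟩ := h1
      obtain ⟨y', hy'C, hy'π, hy'min⟩ := hmin 1 (by norm_num) y₀ hy₀C hy₀π
      by_cases h2 : ∃ z, z ∈ C ∧ π z = -1
      · obtain ⟨z₀, hz₀C, hz₀π⟩ := h2
        obtain ⟨z', hz'C, hz'π, hz'min⟩ := hmin (-1) (by norm_num) z₀ hz₀C hz₀π
        have hkey : 0 < fL y' + fL z' := by
          have hw : y' + z' ∈ C := hC_add _ hy'C _ hz'C
          have hwπ : π (y' + z') = 0 := by rw [map_add, hy'π, hz'π]; ring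
          have hwne : y' + z' ≠ 0 := by
            intro h
            have hy'z : -y' = z' := by rw [eq_neg_of_add_eq_zero_left h, neg_neg]
            have hy'0 : y' = 0 := hacute y' hy'C (hy'z ▸ hz'C)
            rw [hy'0] at hy'π
            simp at hy'π
          have := hposL _ hw hwπ hwne
          rwa [map_add] at this
        refine ⟨(fL z' - fL y') / 2, ?_, ?_⟩
        · intro y hy hyπ; have := hy'min y hy hyπ; linarith
        · intro z hz hzπ; have := hz'min z hz hzπ; linarith
      · refine ⟨-fL y' + 1, ?_, ?_⟩
        · intro y hy hyπ; have := hy'min y hy hyπ; linarith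
        · intro z hz hzπ; exact absurd ⟨z, hz, hzπ⟩ h2
    · by_cases h2 : ∃ z, z ∈ C ∧ π z = -1
      · obtain ⟨z₀, hz₀C, hz₀π⟩ := h2
        obtain ⟨z', hz'C, hz'π, hz'min⟩ := hmin (-1) (by norm_num) z₀ hz₀C hz₀π
        refine ⟨fL z' - 1, ?_, ?_⟩
        · intro y hy hyπ; exact absurd ⟨y, hy, hyπ⟩ h1
        · intro z hz hzπ; have := hz'min z hz hzπ; linarith
      · exact ⟨0, fun y hy hyπ => absurd ⟨y, hy, hyπ⟩ h1,
          fun z hz hzπ => absurd ⟨z, hz, hzπ⟩ h2⟩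
  -- the extension
  refine ⟨fL + t • π, ?_, ?_⟩
  · intro l
    have h1 : fL (l : F) = φ l := hfL l
    have h2 : π (l : F) = 0 := hLπ _ l.2
    simp [LinearMap.add_apply, LinearMap.smul_apply, h1, h2]
  · intro x hxC hxne
    have key : ∀ u ∈ C, u ≠ 0 → 0 < fL u + t * π u := by
      intro u huC hune
      rcases lt_trichotomy (π u) 0 with hlt | heq | hgt
      · set z := (-(π u))⁻¹ • u with hz
        have hpos : (0 : ℝ) < -(π u) := by linarith
        have hzC : z ∈ C := hC_smul _ (by positivity) u huC
        have hzπ : π z = -1 := by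
          rw [hz, map_smul, smul_eq_mul]
          field_simp
          rw [div_self hlt.ne]
        have htz := ht2 z hzC hzπ
        have hfz : fL z = (-(π u))⁻¹ * fL u := by rw [hz, map_smul, smul_eq_mul]
        have hfu : fL u = (-(π u)) * fL z := by
          rw [hfz, ← mul_assoc, mul_inv_cancel₀ hpos.ne', one_mul]
        rw [hfu]
        nlinarith
      · have := hposL u huC heq hune
        rw [heq]; simpa using this
      · set y := (π u)⁻¹ • u with hy
        have hyC : y ∈ C := hC_smul _ (by positivity) u huC
        have hyπ : π y = 1 := by
          rw [hy, map_smul, smul_eq_mul, inv_mul_cancel₀ hgt.ne']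
        have hty := ht1 y hyC hyπ
        have hfy : fL y = (π u)⁻¹ * fL u := by rw [hy, map_smul, smul_eq_mul]
        have hfu : fL u = (π u) * fL y := by
          rw [hfy, ← mul_assoc, mul_inv_cancel₀ hgt.ne', one_mul]
        rw [hfu]
        nlinarith
    have := key x hxC hxne
    simpa [LinearMap.add_apply, LinearMap.smul_apply, smul_eq_mul] using this
end

section
/- Let T ⊆ ℝⁿ be a closed set with 0 < Lebesgue measure of T* < ∞ for a bounded measurable subset T* ⊆ T, let μ be a measure on T with a.e. positive locally integrable density with respect to Lebesgue measure, and let I ⊆ ℤ₊ⁿ be a finite nonempty set of multi-indices with N = card I. Then the linear map A : L^∞(T*) → ℝ^N defined by A(u) = (∫_{T*} u(t) t^i dμ(t))_{i∈I} is surjective. -/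
open MeasureTheory

/-- The monomial function `t ^ i = t₁^{i₁} ⋯ tₙ^{iₙ}` on `ℝⁿ`. -/
noncomputable def mono (n : ℕ) (i : Fin n → ℕ) (t : EuclideanSpace ℝ (Fin n)) : ℝ :=
  ∏ k, t k ^ i k

section Aux
open MvPolynomial


lemma mv_zero_set : ∀ (n : ℕ) (p : MvPolynomial (Fin n) ℝ), p ≠ 0 →
    volume {x : Fin n → ℝ | MvPolynomial.eval x p = 0} = 0 := by
  intro n
  induction n with
  | zero =>
    intro p hp
    obtain ⟨c, rfl⟩ := MvPolynomial.C_surjective (Fin 0) p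
    have hc : c ≠ 0 := fun h => hp (by simp [h])
    have : {x : Fin 0 → ℝ | MvPolynomial.eval x (C c) = 0} = ∅ := by
      ext x; simp [hc]
    rw [this]; exact measure_empty
  | succ n ih =>
    intro p hp
    set q := finSuccEquiv ℝ n p with hqdef
    have hq : q ≠ 0 := fun h =>
      hp ((finSuccEquiv ℝ n).injective (by rw [← hqdef, h, map_zero]))
    obtain ⟨k, hk⟩ : ∃ k, q.coeff k ≠ 0 := by
      by_contra h; push_neg at h
      exact hq (Polynomial.ext fun k => by simp [h])
    have hcont : Continuous fun z : (Fin n → ℝ) × ℝ =>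
        MvPolynomial.eval (Fin.cons z.2 z.1) p := by
      have h1 : Continuous fun x : Fin (n+1) → ℝ => MvPolynomial.eval x p :=
        MvPolynomial.continuous_eval (p := p)
      have h2 : Continuous fun z : (Fin n → ℝ) × ℝ => (Fin.cons z.2 z.1 : Fin (n+1) → ℝ) := by
        apply continuous_pi
        intro j
        refine Fin.cases ?_ ?_ j
        · simpa using continuous_snd
        · intro i; simp only [Fin.cons_succ]; exact (continuous_apply i).comp continuous_fst
      exact h1.comp h2
    set S' : Set ((Fin n → ℝ) × ℝ) :=
      {z | MvPolynomial.eval (Fin.cons z.2 z.1) p = 0} with hS'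
    have hS'meas : MeasurableSet S' := (isClosed_eq hcont continuous_const).measurableSet
    have hfiber : ∀ᵐ s : Fin n → ℝ, volume (Prod.mk s ⁻¹' S') = 0 := by
      have hB : ∀ᵐ s : Fin n → ℝ, MvPolynomial.eval s (q.coeff k) ≠ 0 := by
        rw [ae_iff]
        simpa [not_not] using ih (q.coeff k) hk
      filter_upwards [hB] with s hs
      have hr : q.map (MvPolynomial.eval s) ≠ 0 := fun h0 => hs (by
        have := congrArg (fun r => Polynomial.coeff r k) h0
        simpa [Polynomial.coeff_map] using this)
      have : Prod.mk s ⁻¹' S' = {y : ℝ | Polynomial.IsRoot (q.map (MvPolynomial.eval s)) y} := by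
        ext y
        simp only [Set.mem_preimage, hS', Set.mem_setOf_eq, Polynomial.IsRoot]
        rw [eval_eq_eval_mv_eval']
      rw [this]
      exact (Polynomial.finite_setOf_isRoot hr).measure_zero _
    -- transfer via product decomposition
    have hmp := measurePreserving_piFinSuccAbove (fun _ : Fin (n + 1) => (volume : Measure ℝ)) 0
    set e := MeasurableEquiv.piFinSuccAbove (fun _ : Fin (n + 1) => ℝ) 0 with he
    set A : Set (ℝ × (Fin n → ℝ)) := Prod.swap ⁻¹' S' with hA
    have hAmeas : MeasurableSet A := hS'meas.preimage measurable_swap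
    have hpre : {x : Fin (n + 1) → ℝ | MvPolynomial.eval x p = 0} = e ⁻¹' A := by
      ext x
      have hex : Prod.swap (e x) = (Fin.tail x, x 0) := by
        simp [he, MeasurableEquiv.piFinSuccAbove, Fin.insertNthEquiv, Fin.removeNth_zero]
      simp only [Set.mem_setOf_eq, Set.mem_preimage, hA, hex, hS', Fin.cons_self_tail]
    rw [hpre, volume_pi, MeasureTheory.MeasurePreserving.measure_preimage hmp
      hAmeas.nullMeasurableSet]
    have : ((volume : Measure ℝ).prod (Measure.pi fun _ : Fin n => volume)) A
        = ((Measure.pi fun _ : Fin n => (volume : Measure ℝ)).prod (volume : Measure ℝ)) S' := by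
      rw [← Measure.prod_swap, Measure.map_apply measurable_swap hAmeas]
      simp [hA, Set.preimage_preimage]
    rw [this]
    rw [show (Measure.pi fun _ : Fin n => (volume : Measure ℝ)) = volume from volume_pi.symm,
      Measure.measure_prod_null hS'meas]
    exact hfiber


lemma zero_set_euclidean (n : ℕ) (p : MvPolynomial (Fin n) ℝ) (hp : p ≠ 0) :
    volume {t : EuclideanSpace ℝ (Fin n) | MvPolynomial.eval (fun k => t k) p = 0} = 0 := by
  have h := mv_zero_set n p hp
  have hmp := EuclideanSpace.volume_preserving_symm_measurableEquiv_toLp (Fin n)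
  have hmeasset : MeasurableSet {x : Fin n → ℝ | MvPolynomial.eval x p = 0} := by
    have hc : Continuous fun x : Fin n → ℝ => MvPolynomial.eval x p :=
      MvPolynomial.continuous_eval (p := p)
    exact (isClosed_eq hc continuous_const).measurableSet
  have hpre : {t : EuclideanSpace ℝ (Fin n) | MvPolynomial.eval (fun k => t k) p = 0}
      = (MeasurableEquiv.toLp 2 (Fin n → ℝ)).symm ⁻¹' {x | MvPolynomial.eval x p = 0} := rfl
  rw [hpre, hmp.measure_preimage hmeasset.nullMeasurableSet, h]

end Aux

set_option maxHeartbeats 1000000 in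
/-- Let `T ⊆ ℝⁿ` be closed, `T* ⊆ T` a bounded measurable subset of finite
positive Lebesgue measure, `μ` the measure on `T` with a.e. positive locally integrable
density with respect to Lebesgue measure, and `I` a finite nonempty set of multi-indices.
Then the linear map `A : L^∞(T*) → ℝ^I`, `A u = (∫_{T*} u(t) t^i dμ)_{i ∈ I}`, is
surjective. -/
theorem stmt_4 (n : ℕ) (T Tstar : Set (EuclideanSpace ℝ (Fin n))) (hT : IsClosed T)
    (hsub : Tstar ⊆ T) (hTmeas : MeasurableSet Tstar)
    (hTbdd : Bornology.IsBounded Tstar)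
    (hTpos : 0 < volume Tstar) (hTfin : volume Tstar < ⊤)
    (ρ : EuclideanSpace ℝ (Fin n) → ℝ)
    (hρpos : ∀ᵐ t ∂(volume.restrict T), 0 < ρ t)
    (hρloc : LocallyIntegrableOn ρ T volume)
    (μ : Measure (EuclideanSpace ℝ (Fin n)))
    (hμ : μ = (volume.restrict T).withDensity (fun t => ENNReal.ofReal (ρ t)))
    (I : Finset (Fin n → ℕ)) (hI : I.Nonempty) :
    Function.Surjective
      (fun u : {u : EuclideanSpace ℝ (Fin n) → ℝ // MemLp u ⊤ (μ.restrict Tstar)} =>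
        fun i : I => ∫ t in Tstar, u.1 t * mono n i t ∂μ) := by
  classical
  set ν : Measure (EuclideanSpace ℝ (Fin n)) := μ.restrict Tstar with hν
  -- basic facts
  have hcl : IsCompact (closure Tstar) := hTbdd.isCompact_closure
  have hclT : closure Tstar ⊆ T := hT.closure_subset_iff.mpr hsub
  have hρint : IntegrableOn ρ (closure Tstar) volume :=
    hρloc.integrableOn_compact_subset hclT hcl
  have hμTstar : μ Tstar < ⊤ := by
    rw [hμ, withDensity_apply _ hTmeas, Measure.restrict_restrict hTmeas,
      Set.inter_eq_self_of_subset_left hsub]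
    calc ∫⁻ t in Tstar, ENNReal.ofReal (ρ t) ∂volume
        ≤ ∫⁻ t in closure Tstar, ENNReal.ofReal (ρ t) ∂volume :=
            lintegral_mono_set subset_closure
      _ < ⊤ := hρint.lintegral_lt_top
  haveI hfin : IsFiniteMeasure ν := by
    constructor
    rw [hν, Measure.restrict_apply_univ]
    exact hμTstar
  -- continuity of monomials
  have hmono_cont : ∀ i : Fin n → ℕ, Continuous (mono n i) := by
    intro i
    apply continuous_finset_prod
    intro k _
    exact ((continuous_apply k).comp (PiLp.continuous_ofLp (p := 2) (β := fun _ : Fin n => ℝ))).pow _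
  -- bounds and integrability for continuous functions
  have hmem : ∀ f : EuclideanSpace ℝ (Fin n) → ℝ, Continuous f → MemLp f ⊤ ν := by
    intro f hf
    obtain ⟨C, hC⟩ := hcl.exists_bound_of_continuousOn hf.continuousOn
    refine memLp_top_of_bound hf.aestronglyMeasurable C ?_
    rw [hν]
    exact ae_restrict_of_forall_mem hTmeas fun t ht => hC t (subset_closure ht)
  have hint : ∀ f : EuclideanSpace ℝ (Fin n) → ℝ, Continuous f → Integrable f ν :=
    fun f hf => (hmem f hf).integrable le_top
  -- the Gram matrix
  set m : Matrix I I ℝ :=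
    fun i j => ∫ t in Tstar, mono n j.1 t * mono n i.1 t ∂μ with hm
  have hinj : Function.Injective m.mulVecLin := by
    rw [injective_iff_map_eq_zero]
    intro c hc
    rw [Matrix.mulVecLin_apply] at hc
    set g : EuclideanSpace ℝ (Fin n) → ℝ := fun t => ∑ i : I, c i * mono n i.1 t with hg
    have hgcont : Continuous g := by
      apply continuous_finset_sum
      intro i _
      exact continuous_const.mul (hmono_cont i.1)
    -- ∫ g² = 0
    have hgsq : ∫ t in Tstar, g t * g t ∂μ = 0 := by
      have expand : ∀ t, g t * g t
          = ∑ i : I, ∑ j : I, (c i * c j) * (mono n j.1 t * mono n i.1 t) := by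
        intro t
        rw [hg, Finset.sum_mul_sum]
        apply Finset.sum_congr rfl; intro i _
        apply Finset.sum_congr rfl; intro j _
        ring
      have hterm : ∀ (i j : I), Integrable
          (fun t => (c i * c j) * (mono n j.1 t * mono n i.1 t)) ν :=
        fun i j => (hint _ ((hmono_cont j.1).mul (hmono_cont i.1))).const_mul _
      calc ∫ t in Tstar, g t * g t ∂μ
          = ∑ i : I, ∑ j : I, (c i * c j) * m i j := by
            simp_rw [expand]
            rw [integral_finset_sum _ fun i _ => integrable_finset_sum _ fun j _ => hterm i j]
            apply Finset.sum_congr rfl; intro i _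
            rw [integral_finset_sum _ fun j _ => hterm i j]
            apply Finset.sum_congr rfl; intro j _
            rw [MeasureTheory.integral_const_mul]
        _ = ∑ i : I, c i * ((m.mulVec c) i) := by
            apply Finset.sum_congr rfl; intro i _
            rw [Matrix.mulVec, dotProduct, Finset.mul_sum]
            apply Finset.sum_congr rfl; intro j _
            ring
        _ = 0 := by rw [hc]; simp
    -- g = 0 a.e.
    have hgae : ∀ᵐ t ∂ν, g t = 0 := by
      have h0 := (integral_eq_zero_iff_of_nonneg
        (fun t => mul_self_nonneg (g t)) (hint _ (hgcont.mul hgcont))).mp hgsq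
      filter_upwards [h0] with t ht
      exact mul_self_eq_zero.mp ht
    -- push to volume
    set Z : Set (EuclideanSpace ℝ (Fin n)) := {t | g t ≠ 0} with hZ
    have hZmeas : MeasurableSet Z := (isOpen_ne_fun hgcont continuous_const).measurableSet
    have hνZ : ν Z = 0 := by
      have := ae_iff.mp hgae
      simpa [hZ] using this
    have hvolZ : volume (Z ∩ Tstar) = 0 := by
      have h1 : μ (Z ∩ Tstar) = 0 := by
        rw [hν, Measure.restrict_apply hZmeas] at hνZ
        exact hνZ
      rw [hμ, withDensity_apply _ (hZmeas.inter hTmeas)] at h1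
      have hρaem : AEMeasurable (fun t => ENNReal.ofReal (ρ t))
          ((volume.restrict T).restrict (Z ∩ Tstar)) :=
        (hρloc.aestronglyMeasurable.aemeasurable.ennreal_ofReal).restrict
      rw [lintegral_eq_zero_iff' hρaem] at h1
      have h2 : ∀ᵐ t ∂((volume.restrict T).restrict (Z ∩ Tstar)), 0 < ρ t :=
        ae_restrict_of_ae hρpos
      have h3 : ∀ᵐ t ∂((volume.restrict T).restrict (Z ∩ Tstar)), False := by
        filter_upwards [h1, h2] with t ht1 ht2
        rw [Pi.zero_apply, ENNReal.ofReal_eq_zero] at ht1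
        exact absurd ht1 (not_le.mpr ht2)
      have h4 : (volume.restrict T).restrict (Z ∩ Tstar) = 0 := by
        rwa [← ae_eq_bot, ← Filter.eventually_false_iff_eq_bot]
      have h5 : (volume.restrict T) (Z ∩ Tstar) = 0 := by
        rw [← Measure.restrict_apply_univ, h4]; simp
      rwa [Measure.restrict_apply' hT.measurableSet,
        Set.inter_eq_self_of_subset_left
          ((Set.inter_subset_right).trans hsub)] at h5
    -- the zero set of the polynomial has positive measure
    set W : Set (EuclideanSpace ℝ (Fin n)) := {t | g t = 0} with hW
    have hWpos : 0 < volume W := by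
      have hsubW : Tstar ⊆ W ∪ (Z ∩ Tstar) := by
        intro t ht
        by_cases h : g t = 0
        · exact Or.inl h
        · exact Or.inr ⟨h, ht⟩
      have : volume Tstar ≤ volume W + volume (Z ∩ Tstar) :=
        (measure_mono hsubW).trans (measure_union_le _ _)
      rw [hvolZ, add_zero] at this
      exact lt_of_lt_of_le hTpos this
    -- build the polynomial
    set P : MvPolynomial (Fin n) ℝ :=
      ∑ i : I, MvPolynomial.monomial (Finsupp.equivFunOnFinite.symm i.1) (c i) with hP
    have hevalP : ∀ t : EuclideanSpace ℝ (Fin n), MvPolynomial.eval (fun k => t k) P = g t := by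
      intro t
      rw [hP, map_sum, hg]
      apply Finset.sum_congr rfl; intro i _
      rw [MvPolynomial.eval_monomial, mono]
      rw [Finsupp.prod_pow]
      simp [Finsupp.equivFunOnFinite]
    have hPzero : P = 0 := by
      by_contra hPne
      have := zero_set_euclidean n P hPne
      have hWeq : {t : EuclideanSpace ℝ (Fin n) | MvPolynomial.eval (fun k => t k) P = 0} = W := by
        ext t; simp [hevalP t, hW]
      rw [hWeq] at this
      exact absurd this (ne_of_gt hWpos)
    -- conclude c = 0
    funext j
    have hcoeff : MvPolynomial.coeff (Finsupp.equivFunOnFinite.symm j.1) P = c j := by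
      rw [hP, MvPolynomial.coeff_sum]
      rw [Finset.sum_eq_single j]
      · rw [MvPolynomial.coeff_monomial, if_pos rfl]
      · intro i _ hij
        rw [MvPolynomial.coeff_monomial, if_neg]
        intro h
        exact hij (Subtype.ext (Finsupp.equivFunOnFinite.symm.injective h))
      · intro h; exact absurd (Finset.mem_univ j) h
    rw [hPzero] at hcoeff
    simpa using hcoeff.symm
  -- surjectivity of the matrix, and conclusion
  have hsurj : Function.Surjective m.mulVecLin :=
    LinearMap.injective_iff_surjective.mp hinj
  intro y
  obtain ⟨x, hx⟩ := hsurj y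
  rw [Matrix.mulVecLin_apply] at hx
  refine ⟨⟨fun t => ∑ j : I, x j * mono n j.1 t, hmem _ ?_⟩, ?_⟩
  · apply continuous_finset_sum
    intro j _
    exact continuous_const.mul (hmono_cont j.1)
  · funext i
    show ∫ t in Tstar, (∑ j : I, x j * mono n j.1 t) * mono n i.1 t ∂μ = y i
    have hterm : ∀ j : I, Integrable
        (fun t => x j * (mono n j.1 t * mono n i.1 t)) ν :=
      fun j => (hint _ ((hmono_cont j.1).mul (hmono_cont i.1))).const_mul _
    calc ∫ t in Tstar, (∑ j : I, x j * mono n j.1 t) * mono n i.1 t ∂μ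
        = ∫ t in Tstar, ∑ j : I, x j * (mono n j.1 t * mono n i.1 t) ∂μ := by
          congr 1; funext t; rw [Finset.sum_mul]
          apply Finset.sum_congr rfl; intro j _; ring
      _ = ∑ j : I, x j * m i j := by
          rw [integral_finset_sum _ fun j _ => hterm j]
          apply Finset.sum_congr rfl; intro j _
          rw [MeasureTheory.integral_const_mul]
      _ = m.mulVec x i := by
          rw [Matrix.mulVec, dotProduct]
          apply Finset.sum_congr rfl; intro j _; ring
      _ = y i := by rw [hx]
end

section
/- Let T ⊆ ℝⁿ be a closed regular set and I ⊆ ℤ₊ⁿ a finite regular set of multi-indices. Then G_{T,I} is dense in Γ_{T,I}: for every γ ∈ Γ_{T,I} and every δ > 0 there exists g ∈ G_{T,I} with ‖g − γ‖ < δ. -/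
set_option maxHeartbeats 1000000


open MeasureTheory

/-- A set `T ⊆ ℝⁿ` is regular if it is nonempty and for every `t ∈ T` and `ε > 0` the
Lebesgue measure of `{x ∈ T : ‖x - t‖ < ε}` is positive. -/
def RegularSet (n : ℕ) (T : Set (EuclideanSpace ℝ (Fin n))) : Prop :=
  T.Nonempty ∧ ∀ t ∈ T, ∀ ε > (0 : ℝ), 0 < volume {x ∈ T | ‖x - t‖ < ε}

/-- A finite set `I` of multi-indices is regular if it is nonempty and for every `i ∈ I` the
set `σ_i = {j : j k = 0 or j k = i k for each k}` is contained in `I`. -/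
def RegularIdx (n : ℕ) (I : Finset (Fin n → ℕ)) : Prop :=
  I.Nonempty ∧ ∀ i ∈ I, ∀ j : Fin n → ℕ, (∀ k, j k = 0 ∨ j k = i k) → j ∈ I

/-- `Γ_{T,I}`: the set of all `γ ∈ ℝ^I` having a nonnegative Borel representing measure `ν`
on `T` with `∫_T |t^i| dν < ∞` and `∫_T t^i dν = γ_i` for all `i ∈ I`. -/
def Gamma (n : ℕ) (T : Set (EuclideanSpace ℝ (Fin n))) (I : Finset (Fin n → ℕ)) :
    Set (I → ℝ) :=
  {γ | ∃ ν : Measure (EuclideanSpace ℝ (Fin n)), ν Tᶜ = 0 ∧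
    (∀ i : I, Integrable (mono n i) ν) ∧
    (∀ i : I, ∫ t, mono n i t ∂ν = γ i)}

/-- `G_{T,I}`: the set of all nonzero `g ∈ ℝ^I` having a representing density
`f ∈ L¹(T, dt)`, `f ≥ 0` a.e., with `∫_T |t^i| f dt < ∞` and `∫_T t^i f dt = g_i`
for all `i ∈ I`. -/
def GSet (n : ℕ) (T : Set (EuclideanSpace ℝ (Fin n))) (I : Finset (Fin n → ℕ)) :
    Set (I → ℝ) :=
  {g | g ≠ 0 ∧ ∃ f : EuclideanSpace ℝ (Fin n) → ℝ,
    Integrable f (volume.restrict T) ∧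
    (0 ≤ᵐ[volume.restrict T] f) ∧
    (∀ i : I, Integrable (fun t => mono n i t * f t) (volume.restrict T)) ∧
    (∀ i : I, ∫ t in T, mono n i t * f t = g i)}

lemma mono_cont (n : ℕ) (i : Fin n → ℕ) : Continuous (mono n i) := by
  unfold mono
  refine continuous_finset_prod _ fun k _ => ?_
  have : Continuous fun t : EuclideanSpace ℝ (Fin n) => t k :=
    (EuclideanSpace.proj (𝕜 := ℝ) k).continuous
  exact this.pow _

/-- Like `GSet` but without the nonzero condition. -/
def HSet (n : ℕ) (T : Set (EuclideanSpace ℝ (Fin n))) (I : Finset (Fin n → ℕ)) :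
    Set (I → ℝ) :=
  {g | ∃ f : EuclideanSpace ℝ (Fin n) → ℝ,
    Integrable f (volume.restrict T) ∧
    (0 ≤ᵐ[volume.restrict T] f) ∧
    (∀ i : I, Integrable (fun t => mono n i t * f t) (volume.restrict T)) ∧
    (∀ i : I, ∫ t in T, mono n i t * f t = g i)}

lemma HSet_zero (n T I) : (0 : I → ℝ) ∈ HSet n T I := by
  refine ⟨fun _ => 0, ?_, ?_, ?_, ?_⟩
  · simpa using integrable_const (0 : ℝ)
  · exact Filter.Eventually.of_forall fun x => le_refl 0
  · intro i; simpa using integrable_const (0 : ℝ)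
  · intro i; simp

lemma HSet_smul {n : ℕ} {T : Set (EuclideanSpace ℝ (Fin n))} {I : Finset (Fin n → ℕ)} {c : ℝ} (hc : 0 ≤ c) {g : I → ℝ} (hg : g ∈ HSet n T I) :
    c • g ∈ HSet n T I := by
  obtain ⟨f, hint, hpos, hmint, hmval⟩ := hg
  refine ⟨fun t => c * f t, hint.const_mul c, ?_, ?_, ?_⟩
  · filter_upwards [hpos] with x hx
    exact mul_nonneg hc hx
  · intro i
    have := (hmint i).const_mul c
    simpa [mul_comm, mul_assoc, mul_left_comm] using this
  · intro i
    have h1 : (fun t => mono n i t * (c * f t)) = fun t => c * (mono n i t * f t) := by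
      funext t; ring
    rw [h1, integral_const_mul, hmval i]
    simp [mul_comm]

lemma HSet_add {n : ℕ} {T : Set (EuclideanSpace ℝ (Fin n))} {I : Finset (Fin n → ℕ)}
    {g₁ g₂ : I → ℝ} (h₁ : g₁ ∈ HSet n T I) (h₂ : g₂ ∈ HSet n T I) :
    g₁ + g₂ ∈ HSet n T I := by
  obtain ⟨f₁, hint₁, hpos₁, hmint₁, hmval₁⟩ := h₁
  obtain ⟨f₂, hint₂, hpos₂, hmint₂, hmval₂⟩ := h₂
  refine ⟨fun t => f₁ t + f₂ t, hint₁.add hint₂, ?_, ?_, ?_⟩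
  · filter_upwards [hpos₁, hpos₂] with x hx₁ hx₂
    exact add_nonneg hx₁ hx₂
  · intro i
    have := (hmint₁ i).add (hmint₂ i)
    simp only [mul_add]; exact (hmint₁ i).add (hmint₂ i)
  · intro i
    have h1 : (fun t => mono n i t * (f₁ t + f₂ t))
        = fun t => mono n i t * f₁ t + mono n i t * f₂ t := by
      funext t; ring
    rw [h1, integral_add (hmint₁ i) (hmint₂ i), hmval₁ i, hmval₂ i]
    simp

lemma HSet_convex (n : ℕ) (T : Set (EuclideanSpace ℝ (Fin n))) (I : Finset (Fin n → ℕ)) :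
    Convex ℝ (HSet n T I) :=
  fun _ hx _ hy _ _ ha hb _ => HSet_add (HSet_smul ha hx) (HSet_smul hb hy)

lemma mono_integrableOn {n : ℕ} (i : Fin n → ℕ) {s : Set (EuclideanSpace ℝ (Fin n))}
    (t : EuclideanSpace ℝ (Fin n)) {ε : ℝ} (hs : s ⊆ Metric.ball t ε) :
    IntegrableOn (mono n i) s volume :=
  (((mono_cont n i).continuousOn.integrableOn_compact
    (isCompact_closedBall t ε))).mono_set (hs.trans Metric.ball_subset_closedBall)

/-- The bump element: moments of the indicator of a ball intersected with `T`. -/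
lemma bump_mem (n : ℕ) (T : Set (EuclideanSpace ℝ (Fin n))) (hT : IsClosed T)
    (I : Finset (Fin n → ℕ)) (t : EuclideanSpace ℝ (Fin n)) (ε : ℝ) :
    (fun i : I => ∫ x, mono n i x ∂(volume.restrict (Metric.ball t ε ∩ T))) ∈ HSet n T I := by
  refine ⟨(Metric.ball t ε).indicator (fun _ => (1:ℝ)), ?_, ?_, ?_, ?_⟩
  · rw [integrable_indicator_iff Metric.isOpen_ball.measurableSet]
    refine (integrableOn_const_iff (by simp)).2 (Or.inr ?_)
    exact lt_of_le_of_lt (Measure.restrict_apply_le _ _) measure_ball_lt_top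
  · refine Filter.Eventually.of_forall fun x => ?_
    exact Set.indicator_nonneg (fun _ _ => zero_le_one) x
  · rintro ⟨j, hj⟩
    show Integrable (fun x => mono n j x * (Metric.ball t ε).indicator (fun _ => (1:ℝ)) x)
      (volume.restrict T)
    have h1 : (fun x => mono n j x * (Metric.ball t ε).indicator (fun _ => (1:ℝ)) x)
        = (Metric.ball t ε).indicator (mono n j) := by
      funext x
      by_cases hx : x ∈ Metric.ball t ε <;>
        simp [Set.indicator_of_mem, Set.indicator_of_notMem, hx]
    have h2 : IntegrableOn (mono n j) (Metric.ball t ε) (volume.restrict T) := by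
      rw [IntegrableOn, Measure.restrict_restrict Metric.isOpen_ball.measurableSet]
      exact mono_integrableOn j t Set.inter_subset_left
    have h3 := (integrable_indicator_iff Metric.isOpen_ball.measurableSet).2 h2
    exact h1 ▸ h3
  · rintro ⟨j, hj⟩
    show (∫ x in T, mono n j x * (Metric.ball t ε).indicator (fun _ => (1:ℝ)) x)
      = ∫ x, mono n j x ∂(volume.restrict (Metric.ball t ε ∩ T))
    have h1 : (fun x => mono n j x * (Metric.ball t ε).indicator (fun _ => (1:ℝ)) x)
        = (Metric.ball t ε).indicator (mono n j) := by
      funext x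
      by_cases hx : x ∈ Metric.ball t ε <;>
        simp [Set.indicator_of_mem, Set.indicator_of_notMem, hx]
    rw [h1, integral_indicator Metric.isOpen_ball.measurableSet,
      Measure.restrict_restrict Metric.isOpen_ball.measurableSet]

lemma bump_measure_pos {n : ℕ} {T : Set (EuclideanSpace ℝ (Fin n))} (hTreg : RegularSet n T)
    {t : EuclideanSpace ℝ (Fin n)} (ht : t ∈ T) {ε : ℝ} (hε : 0 < ε) :
    0 < (volume (Metric.ball t ε ∩ T)).toReal := by
  have h1 : Metric.ball t ε ∩ T = {x ∈ T | ‖x - t‖ < ε} := by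
    ext x
    simp [Metric.mem_ball, dist_eq_norm, and_comm]
  refine ENNReal.toReal_pos ?_ ?_
  · rw [h1]; exact (hTreg.2 t ht ε hε).ne'
  · exact (lt_of_le_of_lt (measure_mono Set.inter_subset_left) measure_ball_lt_top).ne

/-- Let `T ⊆ ℝⁿ` be a closed regular set and `I` a finite regular set of
multi-indices. Then `G_{T,I}` is dense in `Γ_{T,I}`: for every `γ ∈ Γ_{T,I}` and every
`δ > 0` there exists `g ∈ G_{T,I}` with `‖g - γ‖ < δ`. -/
theorem stmt_6 (n : ℕ) (T : Set (EuclideanSpace ℝ (Fin n))) (hT : IsClosed T)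
    (hTreg : RegularSet n T) (I : Finset (Fin n → ℕ)) (hIreg : RegularIdx n I) :
    ∀ γ ∈ Gamma n T I, ∀ δ > (0 : ℝ), ∃ g ∈ GSet n T I, ‖g - γ‖ < δ := by
  intro γ hγ δ hδ
  obtain ⟨ν, hνT, hνint, hνval⟩ := hγ
  obtain ⟨t₀, ht₀⟩ := hTreg.1
  have h0I : (fun _ => 0 : Fin n → ℕ) ∈ I := by
    obtain ⟨i, hi⟩ := hIreg.1
    exact hIreg.2 i hi _ (fun k => Or.inl rfl)
  have key : γ ∈ closure (HSet n T I) := by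
    by_contra hns
    obtain ⟨L, u, hLs, hLγ⟩ := geometric_hahn_banach_closed_point
      ((HSet_convex n T I).closure) isClosed_closure hns
    have hu : 0 < u := by
      have := hLs 0 (subset_closure (HSet_zero n T I))
      simpa using this
    have hle : ∀ h ∈ HSet n T I, L h ≤ 0 := by
      intro h hh
      by_contra hpos
      push_neg at hpos
      have hm : (0:ℝ) ≤ u / L h := le_of_lt (div_pos hu hpos)
      have h2 := hLs _ (subset_closure (HSet_smul hm hh))
      rw [_root_.map_smul, smul_eq_mul, div_mul_cancel₀ _ (ne_of_gt hpos)] at h2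
      exact lt_irrefl u h2
    set c : I → ℝ := fun i => L (fun j => if i = j then 1 else 0) with hc
    have hLv : ∀ v : I → ℝ, L v = ∑ i, v i * c i := by
      intro v
      conv_lhs => rw [pi_eq_sum_univ v]
      rw [map_sum]
      exact Finset.sum_congr rfl fun i _ => by rw [_root_.map_smul, smul_eq_mul]
    set p : EuclideanSpace ℝ (Fin n) → ℝ := fun x => ∑ i : I, mono n i x * c i with hp
    have hpcont : Continuous p :=
      continuous_finset_sum _ fun i _ => (mono_cont n i).mul continuous_const
    have hpT : ∀ x ∈ T, p x ≤ 0 := by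
      intro x hx
      by_contra hppos
      push_neg at hppos
      have hopen : IsOpen {y | p x / 2 < p y} := isOpen_lt continuous_const hpcont
      have hxmem : x ∈ {y | p x / 2 < p y} := half_lt_self hppos
      obtain ⟨ε, hε, hball⟩ := Metric.isOpen_iff.1 hopen x hxmem
      set s : Set (EuclideanSpace ℝ (Fin n)) := Metric.ball x ε ∩ T with hs
      have hsm : MeasurableSet s := Metric.isOpen_ball.measurableSet.inter hT.measurableSet
      have hsfin : volume s < ⊤ :=
        lt_of_le_of_lt (measure_mono Set.inter_subset_left) measure_ball_lt_top
      set g : I → ℝ := fun i => ∫ y, mono n i y ∂(volume.restrict s) with hg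
      have hgH : g ∈ HSet n T I := bump_mem n T hT I x ε
      have hint : ∀ i : I, IntegrableOn (mono n (i : Fin n → ℕ)) s volume :=
        fun i => mono_integrableOn _ x Set.inter_subset_left
      have hLg : L g = ∫ y in s, p y := by
        rw [hLv g]
        have h3 : ∀ i : I, g i * c i = ∫ y in s, mono n i y * c i := by
          intro i; rw [hg]; exact (integral_mul_const _ _).symm
        rw [Finset.sum_congr rfl fun i _ => h3 i, ← integral_finset_sum]
        intro i _
        exact (hint i).mul_const _
      have hppos' : 0 < ∫ y in s, p y := by
        have h1 : ∫ y in s, (p x / 2) ≤ ∫ y in s, p y := by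
          refine setIntegral_mono_on ((integrableOn_const hsfin.ne)) ?_ hsm ?_
          · exact integrable_finset_sum _ fun i _ => (hint i).mul_const _
          · intro y hy
            exact le_of_lt (hball hy.1)
        rw [setIntegral_const, smul_eq_mul] at h1
        refine lt_of_lt_of_le ?_ h1
        exact mul_pos (bump_measure_pos hTreg hx hε) (half_pos hppos)
      exact absurd (hle g hgH) (not_le.2 (hLg ▸ hppos'))
    have hν_ae : ∀ᵐ x ∂ν, x ∈ T := by
      rw [MeasureTheory.ae_iff]
      exact hνT
    have hLγval : L γ = ∫ x, p x ∂ν := by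
      rw [hLv γ]
      have h3 : ∀ i : I, γ i * c i = ∫ x, mono n i x * c i ∂ν := by
        intro i; rw [← hνval i]; exact (integral_mul_const _ _).symm
      rw [Finset.sum_congr rfl fun i _ => h3 i, ← integral_finset_sum]
      intro i _
      exact (hνint i).mul_const _
    have hfinal : L γ ≤ 0 := by
      rw [hLγval]
      refine integral_nonpos_of_ae ?_
      filter_upwards [hν_ae] with x hx
      exact hpT x hx
    linarith
  obtain ⟨h, hhH, hdist⟩ := Metric.mem_closure_iff.1 key (δ/2) (half_pos hδ)
  by_cases hh0 : h = 0
  · -- γ is close to 0; use a small scaled bump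
    rw [hh0, dist_zero_right] at hdist
    set g₀ : I → ℝ := fun i => ∫ x, mono n i x ∂(volume.restrict (Metric.ball t₀ 1 ∩ T)) with hg₀
    have hg₀H : g₀ ∈ HSet n T I := bump_mem n T hT I t₀ 1
    have hval : g₀ ⟨fun _ => 0, h0I⟩ = (volume (Metric.ball t₀ 1 ∩ T)).toReal := by
      show (∫ x, mono n (fun _ => 0 : Fin n → ℕ) x ∂(volume.restrict (Metric.ball t₀ 1 ∩ T))) = _
      simp [mono, Measure.real]
    have hpos : 0 < g₀ ⟨fun _ => 0, h0I⟩ := by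
      rw [hval]; exact bump_measure_pos hTreg ht₀ one_pos
    have hg₀ne : g₀ ≠ 0 := by
      intro he
      rw [he] at hpos
      simp at hpos
    set k : ℝ := (δ/2) / (‖g₀‖ + 1) with hk
    have hkpos : 0 < k := div_pos (half_pos hδ) (by positivity)
    have hgH : k • g₀ ∈ HSet n T I := HSet_smul hkpos.le hg₀H
    have hgne : k • g₀ ≠ 0 := smul_ne_zero hkpos.ne' hg₀ne
    refine ⟨k • g₀, ⟨hgne, hgH⟩, ?_⟩
    have hnorm : ‖k • g₀‖ < δ/2 := by
      rw [norm_smul, Real.norm_eq_abs, abs_of_pos hkpos]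
      have h1 : k * ‖g₀‖ < k * (‖g₀‖ + 1) := by
        exact mul_lt_mul_of_pos_left (lt_add_one _) hkpos
      have h2 : k * (‖g₀‖ + 1) = δ/2 := div_mul_cancel₀ _ (by positivity)
      linarith
    have h3 : ‖k • g₀ - γ‖ ≤ ‖k • g₀‖ + ‖γ‖ := norm_sub_le _ _
    linarith
  · refine ⟨h, ⟨hh0, hhH⟩, ?_⟩
    rw [← dist_eq_norm, dist_comm]
    linarith [half_lt_self hδ]
end

section
/- Let F be a real vector space of dimension 2, let C' ⊆ F be an acute closed convex cone, let L' ⊆ F be a 1-dimensional linear subspace, and let φ' : L' → ℝ be a linear functional with φ'(l) > 0 for every l ∈ L' ∩ C' with l ≠ 0. Then there exists a linear functional Φ' : F → ℝ extending φ' such that Φ'(x) > 0 for every x ∈ C' with x ≠ 0. -/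
set_option maxHeartbeats 1000000 in
/-- Auxiliary: positivity of a perturbed functional on the part of the unit sphere in the cone
where `ψ` has a given sign. -/
lemma stmt_15_aux_half {F : Type*} [NormedAddCommGroup F] [NormedSpace ℝ F]
    [FiniteDimensional ℝ F]
    (C' : Set F) (hC_closed : IsClosed C')
    (Φ0 ψ : F →ₗ[ℝ] ℝ)
    (hpos : ∀ z : F, z ∈ C' → ψ z = 0 → z ≠ 0 → 0 < Φ0 z) :
    ∃ T : ℝ, ∀ x, x ∈ C' → ‖x‖ = 1 → 0 ≤ ψ x → 0 < Φ0 x + T * ψ x := by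
  have hcontΦ0 : Continuous Φ0 := Φ0.continuous_of_finiteDimensional
  have hcontψ : Continuous ψ := ψ.continuous_of_finiteDimensional
  set Kp : Set F := {x | x ∈ C' ∧ ‖x‖ = 1 ∧ 0 ≤ ψ x} with hKpdef
  have hKpcl : IsClosed Kp := by
    have h1 : Kp = C' ∩ ({x | ‖x‖ = 1} ∩ {x | 0 ≤ ψ x}) := rfl
    rw [h1]
    exact hC_closed.inter ((isClosed_eq continuous_norm continuous_const).inter
      (isClosed_le continuous_const hcontψ))
  have hKpc : IsCompact Kp := (isCompact_sphere (0:F) 1).of_isClosed_subset hKpcl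
    (fun x hx => by simpa [Metric.mem_sphere, dist_zero_right] using hx.2.1)
  have hUopen : ∀ t : ℝ, IsOpen {x : F | 0 < Φ0 x + t * ψ x} :=
    fun t => isOpen_lt continuous_const (hcontΦ0.add (continuous_const.mul hcontψ))
  have hcover : Kp ⊆ ⋃ t : ℝ, {x : F | 0 < Φ0 x + t * ψ x} := by
    intro x hx
    rcases hx with ⟨hxC, hxn, hxψ⟩
    rcases eq_or_lt_of_le hxψ with h0 | h0
    · have hxne : x ≠ 0 := by
        intro h; rw [h, norm_zero] at hxn; norm_num at hxn
      refine Set.mem_iUnion.2 ⟨0, ?_⟩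
      simp only [Set.mem_setOf_eq, ← h0]
      have := hpos x hxC h0.symm hxne
      linarith
    · refine Set.mem_iUnion.2 ⟨(1 - Φ0 x) / ψ x, ?_⟩
      simp only [Set.mem_setOf_eq]
      rw [div_mul_cancel₀ _ h0.ne']
      linarith
  obtain ⟨s, hs⟩ := hKpc.elim_finite_subcover _ hUopen hcover
  rcases s.eq_empty_or_nonempty with he | hne
  · refine ⟨0, fun x hxC hxn hxψ => ?_⟩
    have : x ∈ Kp := ⟨hxC, hxn, hxψ⟩
    have := hs this
    rw [he] at this
    simp at this
  · refine ⟨s.max' hne, fun x hxC hxn hxψ => ?_⟩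
    have hxK : x ∈ Kp := ⟨hxC, hxn, hxψ⟩
    obtain ⟨t, ht, hxt⟩ := Set.mem_iUnion₂.1 (hs hxK)
    have hle := s.le_max' t ht
    have : (0:ℝ) < Φ0 x + t * ψ x := hxt
    nlinarith

set_option maxHeartbeats 1000000 in
/-- Auxiliary: openness of the set of good parameters for the `ψ ≥ 0` part. -/
lemma stmt_15_aux_open {F : Type*} [NormedAddCommGroup F] [NormedSpace ℝ F]
    [FiniteDimensional ℝ F]
    (C' : Set F) (hC_closed : IsClosed C')
    (Φ0 ψ : F →ₗ[ℝ] ℝ) :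
    IsOpen {t : ℝ | ∀ x, x ∈ C' → ‖x‖ = 1 → 0 ≤ ψ x → 0 < Φ0 x + t * ψ x} := by
  have hcontΦ0 : Continuous Φ0 := Φ0.continuous_of_finiteDimensional
  have hcontψ : Continuous ψ := ψ.continuous_of_finiteDimensional
  rw [Metric.isOpen_iff]
  intro t ht
  set Kp : Set F := {x | x ∈ C' ∧ ‖x‖ = 1 ∧ 0 ≤ ψ x} with hKpdef
  have hKpcl : IsClosed Kp := by
    have h1 : Kp = C' ∩ ({x | ‖x‖ = 1} ∩ {x | 0 ≤ ψ x}) := rfl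
    rw [h1]
    exact hC_closed.inter ((isClosed_eq continuous_norm continuous_const).inter
      (isClosed_le continuous_const hcontψ))
  have hKpc : IsCompact Kp := (isCompact_sphere (0:F) 1).of_isClosed_subset hKpcl
    (fun x hx => by simpa [Metric.mem_sphere, dist_zero_right] using hx.2.1)
  rcases Kp.eq_empty_or_nonempty with he | hne
  · refine ⟨1, one_pos, fun t' _ => ?_⟩
    intro x hxC hxn hxψ
    have : x ∈ Kp := ⟨hxC, hxn, hxψ⟩
    rw [he] at this
    exact absurd this (Set.notMem_empty x)
  · obtain ⟨x0, hx0K, hmin⟩ := hKpc.exists_isMinOn hne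
      ((hcontΦ0.add (continuous_const.mul hcontψ)).continuousOn :
        ContinuousOn (fun x => Φ0 x + t * ψ x) Kp)
    obtain ⟨x1, hx1K, hmax⟩ := hKpc.exists_isMaxOn hne (hcontψ.continuousOn)
    set m : ℝ := Φ0 x0 + t * ψ x0 with hmdef
    have hm : 0 < m := ht x0 hx0K.1 hx0K.2.1 hx0K.2.2
    set M : ℝ := ψ x1 with hMdef
    have hM : 0 ≤ M := hx1K.2.2
    refine ⟨m / (M + 1), by positivity, fun t' ht' => ?_⟩
    intro x hxC hxn hxψ
    have hxK : x ∈ Kp := ⟨hxC, hxn, hxψ⟩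
    have h1 : m ≤ Φ0 x + t * ψ x := hmin hxK
    have h2 : ψ x ≤ M := hmax hxK
    have h3 : |t' - t| < m / (M + 1) := by
      rw [Metric.mem_ball, Real.dist_eq] at ht'
      exact ht'
    have h4 : -(m / (M + 1)) < t' - t ∧ t' - t < m / (M + 1) := abs_lt.1 h3
    have h5 : (t' - t) * ψ x ≥ -(m / (M + 1)) * ψ x := by nlinarith [h4.1]
    have h6 : -(m / (M + 1)) * ψ x ≥ -(m / (M + 1)) * M := by
      nlinarith [div_pos hm (by linarith : (0:ℝ) < M + 1)]
    have h7 : m / (M + 1) * M < m := by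
      rw [div_mul_eq_mul_div, div_lt_iff₀ (by linarith : (0:ℝ) < M + 1)]
      nlinarith
    have h8 : Φ0 x + t' * ψ x = (Φ0 x + t * ψ x) + (t' - t) * ψ x := by ring
    rw [h8]
    nlinarith

set_option maxHeartbeats 1000000 in
/-- Auxiliary core lemma: existence of a strictly positive perturbation parameter. -/
lemma stmt_15_aux {F : Type*} [NormedAddCommGroup F] [NormedSpace ℝ F]
    [FiniteDimensional ℝ F]
    (C' : Set F) (hC_closed : IsClosed C')
    (hC_add : ∀ x ∈ C', ∀ y ∈ C', x + y ∈ C')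
    (hC_smul : ∀ (c : ℝ), 0 ≤ c → ∀ x ∈ C', c • x ∈ C')
    (hC_acute : C' ∩ (-C') = {0})
    (Φ0 ψ : F →ₗ[ℝ] ℝ)
    (hpos : ∀ z : F, z ∈ C' → ψ z = 0 → z ≠ 0 → 0 < Φ0 z) :
    ∃ t : ℝ, ∀ x, x ∈ C' → ‖x‖ = 1 → 0 < Φ0 x + t * ψ x := by
  -- key pairwise lemma
  have key : ∀ (α : ℝ) (x y : F), x ∈ C' → y ∈ C' → 0 < ψ x → ψ y < 0 →
      Φ0 x + α * ψ x ≤ 0 → Φ0 y + α * ψ y ≤ 0 → False := by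
    intro α x y hx hy hψx hψy h1 h2
    set z : F := ψ x • y + (-ψ y) • x with hzdef
    have hzC : z ∈ C' :=
      hC_add _ (hC_smul _ hψx.le _ hy) _ (hC_smul _ (by linarith) _ hx)
    have hzψ : ψ z = 0 := by
      simp only [hzdef, map_add, map_smul, smul_eq_mul]
      ring
    have hzne : z ≠ 0 := by
      intro h0
      have h3 : ψ x • y = -((-ψ y) • x) := by
        rw [eq_neg_iff_add_eq_zero]; exact h0
      have h4 : ψ x • y ∈ C' := hC_smul _ hψx.le _ hy
      have h5 : ψ x • y ∈ -C' := by
        rw [h3]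
        exact Set.neg_mem_neg.2 (hC_smul _ (by linarith) _ hx)
      have h6 : ψ x • y = 0 := by
        have : ψ x • y ∈ C' ∩ (-C') := ⟨h4, h5⟩
        rwa [hC_acute] at this
      have h7 : y = 0 := by
        rcases smul_eq_zero.1 h6 with h | h
        · exact absurd h hψx.ne'
        · exact h
      rw [h7, map_zero] at hψy; linarith
    have hposz := hpos z hzC hzψ hzne
    have heq : Φ0 z = ψ x * Φ0 y + (-ψ y) * Φ0 x := by
      simp only [hzdef, map_add, map_smul, smul_eq_mul]
    nlinarith [mul_le_mul_of_nonneg_left h2 hψx.le,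
      mul_le_mul_of_nonneg_left h1 (by linarith : (0:ℝ) ≤ -ψ y)]
  obtain ⟨Tp, hTp⟩ := stmt_15_aux_half C' hC_closed Φ0 ψ hpos
  obtain ⟨Tm, hTm'⟩ := stmt_15_aux_half C' hC_closed Φ0 (-ψ)
    (fun z hz h0 hne => hpos z hz (by simpa using h0) hne)
  have hTm : ∀ x, x ∈ C' → ‖x‖ = 1 → ψ x ≤ 0 → 0 < Φ0 x + (-Tm) * ψ x := by
    intro x hxC hxn hxψ
    have := hTm' x hxC hxn (by simpa using hxψ)
    simp only [LinearMap.neg_apply] at this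
    linarith
  set Vp : Set ℝ := {t | ∀ x, x ∈ C' → ‖x‖ = 1 → 0 ≤ ψ x → 0 < Φ0 x + t * ψ x} with hVpdef
  set Vm : Set ℝ := {t | ∀ x, x ∈ C' → ‖x‖ = 1 → ψ x ≤ 0 → 0 < Φ0 x + t * ψ x} with hVmdef
  have hVpup : ∀ t ∈ Vp, ∀ t', t ≤ t' → t' ∈ Vp := by
    intro t ht t' htt' x hxC hxn hxψ
    have := ht x hxC hxn hxψ
    nlinarith
  have hVmdown : ∀ t ∈ Vm, ∀ t', t' ≤ t → t' ∈ Vm := by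
    intro t ht t' htt' x hxC hxn hxψ
    have := ht x hxC hxn hxψ
    nlinarith
  have hVpopen : IsOpen Vp := stmt_15_aux_open C' hC_closed Φ0 ψ
  have hVmopen : IsOpen Vm := by
    have h1 : Vm = {t : ℝ | ∀ x, x ∈ C' → ‖x‖ = 1 → 0 ≤ (-ψ) x →
        0 < Φ0 x + (-t) * (-ψ) x} := by
      ext t
      constructor
      · intro h x hxC hxn hxψ
        simp only [LinearMap.neg_apply] at hxψ ⊢
        have := h x hxC hxn (by linarith)
        linarith [this]
      · intro h x hxC hxn hxψ
        have := h x hxC hxn (by simpa using hxψ)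
        simp only [LinearMap.neg_apply] at this
        linarith [this]
    rw [h1]
    have := (stmt_15_aux_open C' hC_closed Φ0 (-ψ)).preimage (continuous_neg (G := ℝ))
    convert this using 1
    rfl
  have hmain : ∃ t : ℝ, t ∈ Vp ∧ t ∈ Vm := by
    by_contra hcon
    push_neg at hcon
    have hTpVp : Tp ∈ Vp := hTp
    have hTmVm : (-Tm) ∈ Vm := hTm
    have hbdd : BddBelow Vp := by
      refine ⟨-Tm, fun t htv => ?_⟩
      by_contra hlt
      push_neg at hlt
      exact hcon t htv (hVmdown _ hTmVm t hlt.le)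
    set α : ℝ := sInf Vp with hαdef
    have hVpne' : Vp.Nonempty := ⟨Tp, hTpVp⟩
    have hαnotVp : α ∉ Vp := by
      intro hαVp
      rw [Metric.isOpen_iff] at hVpopen
      obtain ⟨ε, hε, hball⟩ := hVpopen α hαVp
      have : α - ε / 2 ∈ Vp := by
        apply hball
        rw [Metric.mem_ball, Real.dist_eq, abs_of_nonpos (by linarith)]
        linarith
      have := csInf_le hbdd this
      linarith
    have hαnotVm : α ∉ Vm := by
      intro hαVm
      rw [Metric.isOpen_iff] at hVmopen
      obtain ⟨ε, hε, hball⟩ := hVmopen α hαVm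
      have h1 : α + ε / 2 ∈ Vm := by
        apply hball
        rw [Metric.mem_ball, Real.dist_eq, abs_of_nonneg (by linarith)]
        linarith
      obtain ⟨s, hsVp, hs⟩ := (csInf_lt_iff hbdd hVpne').1
        (show α < α + ε / 2 by linarith)
      have h2 : α + ε / 2 ∈ Vp := hVpup s hsVp _ hs.le
      exact hcon _ h2 h1
    simp only [hVpdef, Set.mem_setOf_eq, not_forall] at hαnotVp
    obtain ⟨x, hxC, hxn, hxψ, hxle⟩ := hαnotVp
    simp only [hVmdef, Set.mem_setOf_eq, not_forall] at hαnotVm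
    obtain ⟨y, hyC, hyn, hyψ, hyle⟩ := hαnotVm
    push_neg at hxle hyle
    have hψx : 0 < ψ x := by
      rcases eq_or_lt_of_le hxψ with h0 | h0
      · exfalso
        have hxne : x ≠ 0 := by
          intro h; rw [h, norm_zero] at hxn; norm_num at hxn
        have := hpos x hxC h0.symm hxne
        rw [← h0] at hxle
        linarith
      · exact h0
    have hψy : ψ y < 0 := by
      rcases eq_or_lt_of_le hyψ with h0 | h0
      · exfalso
        have hyne : y ≠ 0 := by
          intro h; rw [h, norm_zero] at hyn; norm_num at hyn
        have := hpos y hyC h0 hyne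
        rw [h0] at hyle
        linarith
      · exact h0
    exact key α x y hxC hyC hψx hψy hxle hyle
  obtain ⟨t, htp, htm⟩ := hmain
  refine ⟨t, fun x hxC hxn => ?_⟩
  rcases le_or_gt 0 (ψ x) with h | h
  · exact htp x hxC hxn h
  · exact htm x hxC hxn h.le

set_option maxHeartbeats 1000000 in
/-- Let `F` be a real vector space of dimension 2, `C' ⊆ F` an acute closed
convex cone, `L' ⊆ F` a 1-dimensional linear subspace, and `φ' : L' → ℝ` a linear functional
with `φ' l > 0` for every `l ∈ L' ∩ C'` with `l ≠ 0`. Then there is a linear extension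
`Φ' : F → ℝ` of `φ'` with `Φ' x > 0` for every `x ∈ C'` with `x ≠ 0`.
A convex cone `C'` is acute if `C' ∩ (-C') = {0}`. -/
theorem stmt_15 {F : Type*} [NormedAddCommGroup F] [NormedSpace ℝ F]
    (hF : Module.finrank ℝ F = 2)
    (C' : Set F) (hC_closed : IsClosed C')
    (hC_add : ∀ x ∈ C', ∀ y ∈ C', x + y ∈ C')
    (hC_smul : ∀ (c : ℝ), 0 ≤ c → ∀ x ∈ C', c • x ∈ C')
    (hC_acute : C' ∩ (-C') = {0})
    (L' : Submodule ℝ F) (hL : Module.finrank ℝ L' = 1)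
    (φ' : L' →ₗ[ℝ] ℝ)
    (hφ : ∀ l : L', (l : F) ∈ C' → (l : F) ≠ 0 → 0 < φ' l) :
    ∃ Φ' : F →ₗ[ℝ] ℝ, (∀ l : L', Φ' l = φ' l) ∧ ∀ x ∈ C', x ≠ 0 → 0 < Φ' x := by
  classical
  haveI : FiniteDimensional ℝ F := .of_finrank_eq_succ hF
  obtain ⟨p, hp⟩ := Submodule.exists_isCompl L'
  have hpdim : Module.finrank ℝ p = 1 := by
    have h1 := Submodule.finrank_add_eq_of_isCompl hp
    rw [hF, hL] at h1; omega
  let b : Module.Basis (Fin 1) ℝ p := Module.finBasisOfFinrankEq ℝ p hpdim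
  set Φ0 : F →ₗ[ℝ] ℝ := φ'.comp (L'.linearProjOfIsCompl p hp) with hΦ0def
  set ψ : F →ₗ[ℝ] ℝ := (b.coord 0).comp (p.linearProjOfIsCompl L' hp.symm) with hψdef
  have hΦ0 : ∀ l : L', Φ0 (l : F) = φ' l := by
    intro l
    simp [hΦ0def, Submodule.linearProjOfIsCompl, Submodule.projectionOnto_apply_left hp l]
  have hψ0 : ∀ x : F, x ∈ L' → ψ x = 0 := by
    intro x hx
    simp [hψdef, Submodule.linearProjOfIsCompl, Submodule.projectionOnto_apply_of_mem_right hp.symm hx]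
  have hψker : ∀ x : F, ψ x = 0 → x ∈ L' := by
    intro x hx
    have h0 : p.linearProjOfIsCompl L' hp.symm x = 0 := by
      have hrep := b.sum_repr (p.linearProjOfIsCompl L' hp.symm x)
      rw [Fin.sum_univ_one] at hrep
      have hc : b.coord 0 (p.linearProjOfIsCompl L' hp.symm x) = 0 := hx
      rw [Module.Basis.coord_apply] at hc
      rw [hc, zero_smul] at hrep
      exact hrep.symm
    exact (Submodule.linearProjOfIsCompl_apply_eq_zero_iff hp.symm).1 h0
  have hpos : ∀ z : F, z ∈ C' → ψ z = 0 → z ≠ 0 → 0 < Φ0 z := by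
    intro z hzC hzψ hzne
    have hzL : z ∈ L' := hψker z hzψ
    have := hφ ⟨z, hzL⟩ hzC hzne
    rwa [← hΦ0 ⟨z, hzL⟩] at this
  obtain ⟨t, ht⟩ := stmt_15_aux C' hC_closed hC_add hC_smul hC_acute Φ0 ψ hpos
  refine ⟨Φ0 + t • ψ, ?_, ?_⟩
  · intro l
    simp only [LinearMap.add_apply, LinearMap.smul_apply, smul_eq_mul]
    rw [hΦ0 l, hψ0 l l.2]
    ring
  · intro x hxC hxne
    have hnx : 0 < ‖x‖ := norm_pos_iff.2 hxne
    set k : F := ‖x‖⁻¹ • x with hkdef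
    have hkC : k ∈ C' := hC_smul _ (by positivity) _ hxC
    have hkn : ‖k‖ = 1 := by
      rw [hkdef, norm_smul, norm_inv, norm_norm, inv_mul_cancel₀ hnx.ne']
    have hk : 0 < Φ0 k + t * ψ k := ht k hkC hkn
    have hΦk : Φ0 k + t * ψ k = ‖x‖⁻¹ * (Φ0 x + t * ψ x) := by
      simp only [hkdef, map_smul, smul_eq_mul]
      ring
    rw [hΦk] at hk
    have h0 : 0 < Φ0 x + t * ψ x := by
      have := mul_pos hnx hk
      rwa [← mul_assoc, mul_inv_cancel₀ hnx.ne', one_mul] at this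
    simp only [LinearMap.add_apply, LinearMap.smul_apply, smul_eq_mul]
    linarith
end

section
/- Let T ⊆ ℝⁿ be a closed regular set, I ⊆ ℤ₊ⁿ a finite regular set of multi-indices, and ν a nonnegative Borel measure on T with ∫_T |y^i| dν(y) < ∞ for all i ∈ I. For ε ∈ (0,1), let v_ε(y) denote the Lebesgue measure of {x ∈ T : ‖x − y‖ < ε} (which is positive for y ∈ T by regularity), and define ν_ε(t) = ∫_T v_ε(y)^{-1} h_ε(t − y) dν(y) for t ∈ T, where h_ε is the indicator function of the open ball of radius ε centered at 0 in ℝⁿ. Then ν_ε ∈ L¹(T, dt), ν_ε ≥ 0, ∫_T |t^i| ν_ε(t) dt < ∞ for all i ∈ I, and lim_{ε→0} ∫_T t^i ν_ε(t) dt = ∫_T y^i dν(y) for every i ∈ I. -/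
set_option autoImplicit false
set_option maxHeartbeats 1000000


open MeasureTheory Filter

/-- `v_ε(y)`: the Lebesgue measure of `{x ∈ T : ‖x - y‖ < ε}`. -/
noncomputable def volBall (n : ℕ) (T : Set (EuclideanSpace ℝ (Fin n))) (ε : ℝ)
    (y : EuclideanSpace ℝ (Fin n)) : ℝ :=
  (volume {x ∈ T | ‖x - y‖ < ε}).toReal

/-- `ν_ε(t) = ∫_T v_ε(y)⁻¹ h_ε(t - y) dν(y)`, where `h_ε` is the indicator of the open
ball of radius `ε` centered at `0`. -/
noncomputable def nuEps (n : ℕ) (T : Set (EuclideanSpace ℝ (Fin n)))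
    (ν : Measure (EuclideanSpace ℝ (Fin n))) (ε : ℝ)
    (t : EuclideanSpace ℝ (Fin n)) : ℝ :=
  ∫ y, (if ‖t - y‖ < ε then (volBall n T ε y)⁻¹ else 0) ∂ν

open scoped ENNReal NNReal

namespace Stmt16Aux

variable {n : ℕ} {T : Set (EuclideanSpace ℝ (Fin n))}

noncomputable def gE (n : ℕ) (T : Set (EuclideanSpace ℝ (Fin n))) (i : Fin n → ℕ) (ε : ℝ)
    (y : EuclideanSpace ℝ (Fin n)) : ℝ :=
  (volBall n T ε y)⁻¹ * ∫ t in T, (if ‖t - y‖ < ε then mono n i t else 0) ∂volume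

lemma abs_coord_le_norm (z : EuclideanSpace ℝ (Fin n)) (k : Fin n) : |z k| ≤ ‖z‖ := by
  rw [EuclideanSpace.norm_eq]
  have h1 : |z k| = Real.sqrt (‖z k‖ ^ 2) := by
    rw [Real.sqrt_sq (norm_nonneg _), Real.norm_eq_abs]
  rw [h1]
  exact Real.sqrt_le_sqrt (Finset.single_le_sum (f := fun j => ‖z j‖ ^ 2)
    (fun j _ => sq_nonneg _) (Finset.mem_univ k))

lemma continuous_mono (i : Fin n → ℕ) : Continuous (mono n i) := by
  unfold mono
  exact continuous_finset_prod _ fun k _ => (PiLp.continuous_apply 2 _ k).pow (i k)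

lemma meas_sep (hT : IsClosed T) (ε : ℝ) :
    MeasurableSet {p : EuclideanSpace ℝ (Fin n) × EuclideanSpace ℝ (Fin n) |
      p.2 ∈ T ∧ ‖p.2 - p.1‖ < ε} := by
  apply MeasurableSet.inter
  · exact hT.measurableSet.preimage measurable_snd
  · exact (isOpen_lt (continuous_snd.sub continuous_fst).norm continuous_const).measurableSet

lemma measurable_volBall (hT : IsClosed T) (ε : ℝ) : Measurable (volBall n T ε) := by
  have := (measurable_measure_prodMk_left (ν := volume) (meas_sep hT ε)).ennreal_toReal
  exact this

lemma measurable_F (hT : IsClosed T) (ε : ℝ) :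
    Measurable fun p : EuclideanSpace ℝ (Fin n) × EuclideanSpace ℝ (Fin n) =>
      if ‖p.1 - p.2‖ < ε then (volBall n T ε p.2)⁻¹ else 0 := by
  apply Measurable.ite
  · exact (isOpen_lt (continuous_fst.sub continuous_snd).norm continuous_const).measurableSet
  · exact ((measurable_volBall hT ε).comp measurable_snd).inv
  · exact measurable_const

lemma volA_lt_top (ε : ℝ) (y : EuclideanSpace ℝ (Fin n)) :
    volume {x ∈ T | ‖x - y‖ < ε} < ⊤ := by
  apply lt_of_le_of_lt (measure_mono (fun x hx => ?_)) (measure_ball_lt_top (x := y) (r := ε))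
  · exact Metric.mem_ball.2 (by rw [dist_eq_norm]; exact hx.2)

lemma integrable_D {I : Finset (Fin n → ℕ)} (hIreg : RegularIdx n I)
    {ν : Measure (EuclideanSpace ℝ (Fin n))}
    (hνmom : ∀ i : I, Integrable (mono n i) ν) {i : Fin n → ℕ} (hi : i ∈ I) :
    Integrable (fun y => ∏ k, (1 + |y k| ^ i k)) ν := by
  have hrw : ∀ y : EuclideanSpace ℝ (Fin n), ∏ k, (1 + |y k| ^ i k)
      = ∑ t : Finset (Fin n), |mono n (fun k => if k ∈ tᶜ then i k else 0) y| := by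
    intro y
    rw [Fintype.prod_add (fun _ => (1:ℝ)) (fun k => |y k| ^ i k)]
    refine Finset.sum_congr rfl fun t _ => ?_
    rw [Finset.prod_const_one, one_mul]
    unfold mono
    rw [Finset.abs_prod]
    rw [← Finset.prod_subset (Finset.subset_univ tᶜ)
      (f := fun k => |y k ^ (if k ∈ tᶜ then i k else 0)|) ?_]
    · exact Finset.prod_congr rfl fun k hk => by rw [if_pos hk, abs_pow]
    · intro k _ hk
      simp only [if_neg hk, pow_zero, abs_one]
  rw [funext hrw]
  apply integrable_finset_sum
  intro t _
  have hjI : (fun k => if k ∈ tᶜ then i k else 0) ∈ I := by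
    refine hIreg.2 i hi _ fun k => ?_
    by_cases h : k ∈ tᶜ
    · exact Or.inr (if_pos h)
    · exact Or.inl (if_neg h)
  exact (hνmom ⟨_, hjI⟩).abs

/-- pointwise bound `(a+1)^m ≤ 2^m (1 + a^m)` for `a ≥ 0`. -/

lemma pow_bound {a : ℝ} (ha : 0 ≤ a) (m : ℕ) : (a + 1) ^ m ≤ 2 ^ m * (1 + a ^ m) := by
  rcases le_total a 1 with h | h
  · calc (a + 1) ^ m ≤ 2 ^ m := by
          apply pow_le_pow_left₀ (by linarith) (by linarith)
        _ ≤ 2 ^ m * (1 + a ^ m) := by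
          nlinarith [pow_nonneg ha m, pow_pos (show (0:ℝ) < 2 by norm_num) m]
  · calc (a + 1) ^ m ≤ (2 * a) ^ m := by
          apply pow_le_pow_left₀ (by linarith) (by linarith)
        _ = 2 ^ m * a ^ m := by rw [mul_pow]
        _ ≤ 2 ^ m * (1 + a ^ m) := by
          nlinarith [pow_pos (show (0:ℝ) < 2 by norm_num) m]

lemma Dprime_le (i : Fin n → ℕ) (y : EuclideanSpace ℝ (Fin n)) :
    ∏ k, (|y k| + 1) ^ i k ≤ 2 ^ (∑ k, i k) * ∏ k, (1 + |y k| ^ i k) := by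
  calc ∏ k, (|y k| + 1) ^ i k ≤ ∏ k, 2 ^ i k * (1 + |y k| ^ i k) := by
        apply Finset.prod_le_prod
        · intro k _; positivity
        · intro k _; exact pow_bound (abs_nonneg _) _
    _ = 2 ^ (∑ k, i k) * ∏ k, (1 + |y k| ^ i k) := by
        rw [Finset.prod_mul_distrib, Finset.prod_pow_eq_pow_sum]

lemma abs_mono_le (i : Fin n → ℕ) {t y : EuclideanSpace ℝ (Fin n)} (h : ‖t - y‖ ≤ 1) :
    |mono n i t| ≤ ∏ k, (|y k| + 1) ^ i k := by
  unfold mono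
  rw [Finset.abs_prod]
  apply Finset.prod_le_prod (fun k _ => abs_nonneg _)
  intro k _
  rw [abs_pow]
  apply pow_le_pow_left₀ (abs_nonneg _)
  have h1 : |t k - y k| ≤ 1 := by
    have := abs_coord_le_norm (t - y) k
    simp only [PiLp.sub_apply] at this
    linarith
  have := abs_sub_abs_le_abs_sub (t k) (y k)
  linarith [abs_sub_abs_le_abs_sub (t k) (y k), neg_abs_le (t k)]

lemma lint_swap (hT : IsClosed T) (ε : ℝ) (ν : Measure (EuclideanSpace ℝ (Fin n))) [SFinite ν]
    (H : EuclideanSpace ℝ (Fin n) → ℝ≥0∞) (hH : Measurable H) (hHne : ∀ t, H t ≠ ⊤) :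
    ∫⁻ t in T, H t * ∫⁻ y, ENNReal.ofReal
        (if ‖t - y‖ < ε then (volBall n T ε y)⁻¹ else 0) ∂ν ∂volume
    = ∫⁻ y, ENNReal.ofReal ((volBall n T ε y)⁻¹)
        * ∫⁻ t in {x ∈ T | ‖x - y‖ < ε}, H t ∂volume ∂ν := by
  have step1 : ∀ t, H t * ∫⁻ y, ENNReal.ofReal
        (if ‖t - y‖ < ε then (volBall n T ε y)⁻¹ else 0) ∂ν
      = ∫⁻ y, H t * ENNReal.ofReal
        (if ‖t - y‖ < ε then (volBall n T ε y)⁻¹ else 0) ∂ν := by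
    intro t
    rw [lintegral_const_mul' _ _ (hHne t)]
  simp_rw [step1]
  rw [lintegral_lintegral_swap]
  swap
  · exact ((hH.comp measurable_fst).mul
      (ENNReal.measurable_ofReal.comp (measurable_F hT ε))).aemeasurable
  refine lintegral_congr fun y => ?_
  have hs : MeasurableSet {t : EuclideanSpace ℝ (Fin n) | ‖t - y‖ < ε} :=
    (isOpen_lt (continuous_id.sub continuous_const).norm continuous_const).measurableSet
  have hpt : ∀ t : EuclideanSpace ℝ (Fin n),
      H t * ENNReal.ofReal (if ‖t - y‖ < ε then (volBall n T ε y)⁻¹ else 0)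
      = Set.indicator {t : EuclideanSpace ℝ (Fin n) | ‖t - y‖ < ε}
          (fun t => ENNReal.ofReal ((volBall n T ε y)⁻¹) * H t) t := by
    intro t
    by_cases h : ‖t - y‖ < ε
    · simp [Set.indicator_apply, h, mul_comm]
    · simp [Set.indicator_apply, h]
  simp_rw [hpt]
  rw [lintegral_indicator hs, Measure.restrict_restrict hs]
  have hset : {t : EuclideanSpace ℝ (Fin n) | ‖t - y‖ < ε} ∩ T = {x ∈ T | ‖x - y‖ < ε} := by
    ext x; simp [and_comm]
  rw [hset, lintegral_const_mul' _ _ ENNReal.ofReal_ne_top]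

lemma ae_mem_T {ν : Measure (EuclideanSpace ℝ (Fin n))} (hνT : ν Tᶜ = 0) :
    ∀ᵐ y ∂ν, y ∈ T := by
  rw [ae_iff]
  convert hνT using 2
  rfl

lemma ofReal_inv_volBall (hTreg : RegularSet n T) {ε : ℝ} (hε : 0 < ε)
    {y : EuclideanSpace ℝ (Fin n)} (hy : y ∈ T) :
    ENNReal.ofReal ((volBall n T ε y)⁻¹) = (volume {x ∈ T | ‖x - y‖ < ε})⁻¹ := by
  have hpos := hTreg.2 y hy ε hε
  unfold volBall
  rw [← ENNReal.toReal_inv, ENNReal.ofReal_toReal]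
  simp [hpos.ne']

lemma lint_one (hTreg : RegularSet n T) {ε : ℝ} (hε : 0 < ε)
    (ν : Measure (EuclideanSpace ℝ (Fin n))) (hνT : ν Tᶜ = 0) :
    ∫⁻ y, ENNReal.ofReal ((volBall n T ε y)⁻¹)
        * ∫⁻ t in {x ∈ T | ‖x - y‖ < ε}, (1:ℝ≥0∞) ∂volume ∂ν = ν Set.univ := by
  rw [← lintegral_one]
  apply lintegral_congr_ae
  filter_upwards [ae_mem_T hνT] with y hy
  rw [setLIntegral_one, ofReal_inv_volBall hTreg hε hy,
    ENNReal.inv_mul_cancel (hTreg.2 y hy ε hε).ne' (volA_lt_top ε y).ne]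

lemma lint_mom_le (hTreg : RegularSet n T) {ε : ℝ} (hε : 0 < ε) (hε1 : ε ≤ 1)
    (ν : Measure (EuclideanSpace ℝ (Fin n))) (hνT : ν Tᶜ = 0) (i : Fin n → ℕ) :
    ∫⁻ y, ENNReal.ofReal ((volBall n T ε y)⁻¹)
        * ∫⁻ t in {x ∈ T | ‖x - y‖ < ε}, ENNReal.ofReal |mono n i t| ∂volume ∂ν
    ≤ ∫⁻ y, ENNReal.ofReal (2 ^ (∑ k, i k) * ∏ k, (1 + |y k| ^ i k)) ∂ν := by
  apply lintegral_mono_ae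
  filter_upwards [ae_mem_T hνT] with y hy
  have hinner : ∫⁻ t in {x ∈ T | ‖x - y‖ < ε}, ENNReal.ofReal |mono n i t| ∂volume
      ≤ ENNReal.ofReal (∏ k, (|y k| + 1) ^ i k) * volume {x ∈ T | ‖x - y‖ < ε} := by
    rw [← setLIntegral_const]
    apply setLIntegral_mono measurable_const
    intro t ht
    exact ENNReal.ofReal_le_ofReal (abs_mono_le i (le_of_lt (lt_of_lt_of_le ht.2 hε1)))
  calc ENNReal.ofReal ((volBall n T ε y)⁻¹)
        * ∫⁻ t in {x ∈ T | ‖x - y‖ < ε}, ENNReal.ofReal |mono n i t| ∂volume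
      ≤ ENNReal.ofReal ((volBall n T ε y)⁻¹)
        * (ENNReal.ofReal (∏ k, (|y k| + 1) ^ i k) * volume {x ∈ T | ‖x - y‖ < ε}) :=
        by gcongr
    _ = ENNReal.ofReal (∏ k, (|y k| + 1) ^ i k) := by
        rw [ofReal_inv_volBall hTreg hε hy, mul_comm (ENNReal.ofReal _), ← mul_assoc,
          ENNReal.inv_mul_cancel (hTreg.2 y hy ε hε).ne' (volA_lt_top ε y).ne, one_mul]
    _ ≤ ENNReal.ofReal (2 ^ (∑ k, i k) * ∏ k, (1 + |y k| ^ i k)) :=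
        ENNReal.ofReal_le_ofReal (Dprime_le i y)

variable {ν : Measure (EuclideanSpace ℝ (Fin n))} {ε : ℝ} {i : Fin n → ℕ}

lemma nuEps_nonneg [SFinite ν] (t : EuclideanSpace ℝ (Fin n)) : 0 ≤ nuEps n T ν ε t := by
  apply integral_nonneg
  intro y
  by_cases h : ‖t - y‖ < ε
  · simp only [h, if_true]
    exact inv_nonneg.2 ENNReal.toReal_nonneg
  · simp [h]

lemma measurable_nuEps [SFinite ν] (hT : IsClosed T) : Measurable (nuEps n T ν ε) := by
  have := (measurable_F (T := T) hT ε).stronglyMeasurable.integral_prod_right' (ν := ν)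
  exact this.measurable

lemma nuEps_eq_toReal (hT : IsClosed T) (t : EuclideanSpace ℝ (Fin n)) :
    nuEps n T ν ε t = (∫⁻ y, ENNReal.ofReal
      (if ‖t - y‖ < ε then (volBall n T ε y)⁻¹ else 0) ∂ν).toReal := by
  apply integral_eq_lintegral_of_nonneg_ae
  · filter_upwards with y
    by_cases h : ‖t - y‖ < ε
    · simp only [h, if_true]
      exact inv_nonneg.2 ENNReal.toReal_nonneg
    · simp [h]
  · exact ((measurable_F hT ε).comp measurable_prodMk_left).aestronglyMeasurable

lemma ofReal_nuEps_le (hT : IsClosed T) (t : EuclideanSpace ℝ (Fin n)) :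
    ENNReal.ofReal (nuEps n T ν ε t) ≤ ∫⁻ y, ENNReal.ofReal
      (if ‖t - y‖ < ε then (volBall n T ε y)⁻¹ else 0) ∂ν := by
  rw [nuEps_eq_toReal hT]
  exact ENNReal.ofReal_toReal_le

lemma integrable_nuEps [IsFiniteMeasure ν] (hT : IsClosed T) (hTreg : RegularSet n T)
    (hνT : ν Tᶜ = 0) (hε : 0 < ε) : Integrable (nuEps n T ν ε) (volume.restrict T) := by
  constructor
  · exact (measurable_nuEps hT).aestronglyMeasurable
  · rw [hasFiniteIntegral_iff_ofReal (Eventually.of_forall fun t => nuEps_nonneg t)]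
    calc ∫⁻ t in T, ENNReal.ofReal (nuEps n T ν ε t) ∂volume
        ≤ ∫⁻ t in T, (1:ℝ≥0∞) * ∫⁻ y, ENNReal.ofReal
            (if ‖t - y‖ < ε then (volBall n T ε y)⁻¹ else 0) ∂ν ∂volume :=
          lintegral_mono fun t => by simpa using ofReal_nuEps_le hT t
      _ = ν Set.univ := by
          rw [lint_swap hT ε ν _ measurable_const (fun _ => ENNReal.one_ne_top)]
          exact lint_one hTreg hε ν hνT
      _ < ⊤ := measure_lt_top ν _

lemma mom_lt_top [IsFiniteMeasure ν] (hT : IsClosed T) (hTreg : RegularSet n T)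
    (hνT : ν Tᶜ = 0) (hε : 0 < ε) (hε1 : ε ≤ 1) {I : Finset (Fin n → ℕ)}
    (hIreg : RegularIdx n I) (hνmom : ∀ i : I, Integrable (mono n i) ν)
    {i : Fin n → ℕ} (hi : i ∈ I) :
    ∫⁻ t in T, ENNReal.ofReal |mono n i t| * ∫⁻ y, ENNReal.ofReal
        (if ‖t - y‖ < ε then (volBall n T ε y)⁻¹ else 0) ∂ν ∂volume < ⊤ := by
  rw [lint_swap hT ε ν (fun t => ENNReal.ofReal |mono n i t|)
      ((continuous_mono i).measurable.abs.ennreal_ofReal) (fun _ => ENNReal.ofReal_ne_top)]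
  apply lt_of_le_of_lt (lint_mom_le hTreg hε hε1 ν hνT i)
  exact Integrable.lintegral_lt_top ((integrable_D hIreg hνmom hi).const_mul _)

lemma integrable_absmono_nuEps [IsFiniteMeasure ν] (hT : IsClosed T) (hTreg : RegularSet n T)
    (hνT : ν Tᶜ = 0) (hε : 0 < ε) (hε1 : ε ≤ 1) {I : Finset (Fin n → ℕ)}
    (hIreg : RegularIdx n I) (hνmom : ∀ i : I, Integrable (mono n i) ν)
    {i : Fin n → ℕ} (hi : i ∈ I) :
    Integrable (fun t => |mono n i t| * nuEps n T ν ε t) (volume.restrict T) := by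
  constructor
  · exact ((continuous_mono i).measurable.abs.mul (measurable_nuEps hT)).aestronglyMeasurable
  · rw [hasFiniteIntegral_iff_ofReal (Eventually.of_forall fun t =>
      mul_nonneg (abs_nonneg _) (nuEps_nonneg t))]
    refine lt_of_le_of_lt (lintegral_mono fun t => ?_)
      (mom_lt_top hT hTreg hνT hε hε1 hIreg hνmom hi)
    dsimp only
    rw [ENNReal.ofReal_mul (abs_nonneg _)]
    gcongr; exact ofReal_nuEps_le hT t

lemma F_nonneg (t y : EuclideanSpace ℝ (Fin n)) :
    0 ≤ (if ‖t - y‖ < ε then (volBall n T ε y)⁻¹ else 0) := by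
  by_cases h : ‖t - y‖ < ε
  · simp only [h, if_true]; exact inv_nonneg.2 ENNReal.toReal_nonneg
  · simp [h]

lemma integrable_uncurry [IsFiniteMeasure ν]
    (hT : IsClosed T) (hTreg : RegularSet n T)
    (hνT : ν Tᶜ = 0) (hε : 0 < ε) (hε1 : ε ≤ 1) {I : Finset (Fin n → ℕ)}
    (hIreg : RegularIdx n I) (hνmom : ∀ i : I, Integrable (mono n i) ν) (hi : i ∈ I) :
    Integrable (fun p : EuclideanSpace ℝ (Fin n) × EuclideanSpace ℝ (Fin n) =>
        mono n i p.1 * (if ‖p.1 - p.2‖ < ε then (volBall n T ε p.2)⁻¹ else 0))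
      ((volume.restrict T).prod ν) := by
  have hmeas : Measurable (fun p : EuclideanSpace ℝ (Fin n) × EuclideanSpace ℝ (Fin n) =>
      mono n i p.1 * (if ‖p.1 - p.2‖ < ε then (volBall n T ε p.2)⁻¹ else 0)) :=
    ((continuous_mono i).measurable.comp measurable_fst).mul (measurable_F hT ε)
  refine ⟨hmeas.aestronglyMeasurable, ?_⟩
  rw [HasFiniteIntegral, lintegral_prod _ hmeas.enorm.aemeasurable]
  have hpt : ∀ t y : EuclideanSpace ℝ (Fin n),
      (‖mono n i t * (if ‖t - y‖ < ε then (volBall n T ε y)⁻¹ else 0)‖ₑ : ℝ≥0∞)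
      = ENNReal.ofReal |mono n i t| * ENNReal.ofReal
          (if ‖t - y‖ < ε then (volBall n T ε y)⁻¹ else 0) := by
    intro t y
    rw [enorm_mul, Real.enorm_eq_ofReal_abs,
      Real.enorm_eq_ofReal_abs, abs_of_nonneg (F_nonneg t y)]
  refine lt_of_le_of_lt (le_of_eq (lintegral_congr fun t => ?_))
    (mom_lt_top hT hTreg hνT hε hε1 hIreg hνmom hi)
  simp only [hpt]
  rw [lintegral_const_mul' _ _ ENNReal.ofReal_ne_top]

lemma integral_eq_gE [IsFiniteMeasure ν]
    (hT : IsClosed T) (hTreg : RegularSet n T)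
    (hνT : ν Tᶜ = 0) (hε : 0 < ε) (hε1 : ε ≤ 1) {I : Finset (Fin n → ℕ)}
    (hIreg : RegularIdx n I) (hνmom : ∀ i : I, Integrable (mono n i) ν) (hi : i ∈ I) :
    ∫ t in T, mono n i t * nuEps n T ν ε t ∂volume = ∫ y, gE n T i ε y ∂ν := by
  have h1 : ∀ t, mono n i t * nuEps n T ν ε t
      = ∫ y, mono n i t * (if ‖t - y‖ < ε then (volBall n T ε y)⁻¹ else 0) ∂ν := by
    intro t
    rw [nuEps, integral_const_mul]
  simp_rw [h1]
  rw [integral_integral_swap (integrable_uncurry hT hTreg hνT hε hε1 hIreg hνmom hi)]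
  refine integral_congr_ae (Eventually.of_forall fun y => ?_)
  have h2 : ∀ t, mono n i t * (if ‖t - y‖ < ε then (volBall n T ε y)⁻¹ else 0)
      = (volBall n T ε y)⁻¹ * (if ‖t - y‖ < ε then mono n i t else 0) := by
    intro t
    by_cases h : ‖t - y‖ < ε <;> simp [h, mul_comm]
  simp_rw [h2]
  rw [integral_const_mul]
  rfl

lemma gE_eq (y : EuclideanSpace ℝ (Fin n)) :
    gE n T i ε y = (volBall n T ε y)⁻¹ * ∫ t in {x ∈ T | ‖x - y‖ < ε}, mono n i t ∂volume := by
  unfold gE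
  congr 1
  have hs : MeasurableSet {t : EuclideanSpace ℝ (Fin n) | ‖t - y‖ < ε} :=
    (isOpen_lt (continuous_id.sub continuous_const).norm continuous_const).measurableSet
  have : ∀ t : EuclideanSpace ℝ (Fin n), (if ‖t - y‖ < ε then mono n i t else 0)
      = Set.indicator {t : EuclideanSpace ℝ (Fin n) | ‖t - y‖ < ε} (mono n i) t := by
    intro t
    by_cases h : ‖t - y‖ < ε <;> simp [Set.indicator_apply, h]
  simp_rw [this]
  rw [setIntegral_indicator hs]
  rfl

lemma measurable_setA (hT : IsClosed T) (ε : ℝ) (y : EuclideanSpace ℝ (Fin n)) :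
    MeasurableSet {x ∈ T | ‖x - y‖ < ε} := by
  have : {x ∈ T | ‖x - y‖ < ε} = T ∩ {x | ‖x - y‖ < ε} := rfl
  rw [this]
  exact hT.measurableSet.inter
    (isOpen_lt (continuous_id.sub continuous_const).norm continuous_const).measurableSet

lemma volBall_pos (hTreg : RegularSet n T) (hε : 0 < ε) {y : EuclideanSpace ℝ (Fin n)}
    (hy : y ∈ T) : 0 < volBall n T ε y :=
  ENNReal.toReal_pos (hTreg.2 y hy ε hε).ne' (volA_lt_top ε y).ne

lemma measurable_gE (hT : IsClosed T) : Measurable (gE n T i ε) := by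
  apply (measurable_volBall hT ε).inv.mul
  have hsm : StronglyMeasurable (Function.uncurry fun (y t : EuclideanSpace ℝ (Fin n)) =>
      if ‖t - y‖ < ε then mono n i t else 0) := by
    apply Measurable.stronglyMeasurable
    apply Measurable.ite
    · exact (isOpen_lt (continuous_snd.sub continuous_fst).norm continuous_const).measurableSet
    · exact (continuous_mono i).measurable.comp measurable_snd
    · exact measurable_const
  exact (hsm.integral_prod_right' (ν := volume.restrict T)).measurable

lemma gE_bound (hT : IsClosed T) (hTreg : RegularSet n T) (hε : 0 < ε) (hε1 : ε ≤ 1)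
    {y : EuclideanSpace ℝ (Fin n)} (hy : y ∈ T) :
    |gE n T i ε y| ≤ 2 ^ (∑ k, i k) * ∏ k, (1 + |y k| ^ i k) := by
  have hc := volBall_pos hTreg hε hy
  rw [gE_eq, abs_mul, abs_inv, abs_of_pos hc]
  have hle : |∫ t in {x ∈ T | ‖x - y‖ < ε}, mono n i t ∂volume|
      ≤ (∏ k, (|y k| + 1) ^ i k) * volBall n T ε y := by
    rw [← Real.norm_eq_abs]
    exact norm_setIntegral_le_of_norm_le_const (volA_lt_top ε y)
      (fun x hx => by
        rw [Real.norm_eq_abs]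
        exact abs_mono_le i (le_of_lt (lt_of_lt_of_le hx.2 hε1)))
  calc (volBall n T ε y)⁻¹ * |∫ t in {x ∈ T | ‖x - y‖ < ε}, mono n i t ∂volume|
      ≤ (volBall n T ε y)⁻¹ * ((∏ k, (|y k| + 1) ^ i k) * volBall n T ε y) := by
        apply mul_le_mul_of_nonneg_left hle (inv_nonneg.2 hc.le)
    _ = ∏ k, (|y k| + 1) ^ i k := by
        field_simp
    _ ≤ 2 ^ (∑ k, i k) * ∏ k, (1 + |y k| ^ i k) := Dprime_le i y

lemma gE_tendsto (hT : IsClosed T) (hTreg : RegularSet n T) (i : Fin n → ℕ)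
    {y : EuclideanSpace ℝ (Fin n)} (hy : y ∈ T) :
    Tendsto (fun ε => gE n T i ε y) (nhdsWithin 0 (Set.Ioi 0)) (nhds (mono n i y)) := by
  rw [Metric.tendsto_nhdsWithin_nhds]
  intro δ hδ
  obtain ⟨r, hr, hcont⟩ := Metric.continuousAt_iff.1 (continuous_mono i).continuousAt
    (δ / 2) (half_pos hδ)
  refine ⟨min r 1, lt_min hr one_pos, ?_⟩
  intro ε hεI hεd
  have hε : 0 < ε := hεI
  rw [Real.dist_eq, sub_zero, abs_of_pos hε] at hεd
  have hεr : ε < r := lt_of_lt_of_le hεd (min_le_left _ _)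
  have hε1 : ε ≤ 1 := le_of_lt (lt_of_lt_of_le hεd (min_le_right _ _))
  set A := {x ∈ T | ‖x - y‖ < ε} with hA
  set c := volBall n T ε y with hcdef
  have hc : 0 < c := volBall_pos hTreg hε hy
  have hvol : volume A < ⊤ := volA_lt_top ε y
  have hbd : ∀ x ∈ A, ‖mono n i x - mono n i y‖ ≤ δ / 2 := by
    intro x hx
    rw [Real.norm_eq_abs, ← Real.dist_eq]
    exact le_of_lt (hcont (show dist x y < r by
      rw [dist_eq_norm]; exact lt_trans hx.2 hεr))
  have hInt : IntegrableOn (mono n i) A volume := by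
    apply Measure.integrableOn_of_bounded hvol.ne
      (continuous_mono i).aestronglyMeasurable (M := |mono n i y| + δ / 2)
    rw [ae_restrict_iff' (measurable_setA hT ε y)]
    filter_upwards with x hx
    have := hbd x hx
    rw [Real.norm_eq_abs] at this ⊢
    have h2 := abs_sub_abs_le_abs_sub (mono n i x) (mono n i y)
    linarith
  have hconst : IntegrableOn (fun _ => mono n i y) A volume :=
    integrableOn_const hvol.ne
  have hdiff : gE n T i ε y - mono n i y = c⁻¹ * ∫ t in A, (mono n i t - mono n i y) ∂volume := by
    rw [integral_sub hInt hconst, setIntegral_const, gE_eq y, ← hA, ← hcdef]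
    have : volume.real A = c := rfl
    rw [this, smul_eq_mul, mul_sub]
    field_simp
  have hbound : |∫ t in A, (mono n i t - mono n i y) ∂volume| ≤ δ / 2 * c := by
    rw [← Real.norm_eq_abs]
    exact norm_setIntegral_le_of_norm_le_const hvol hbd
  rw [Real.dist_eq, hdiff, abs_mul, abs_inv, abs_of_pos hc]
  calc c⁻¹ * |∫ t in A, (mono n i t - mono n i y) ∂volume| ≤ c⁻¹ * (δ / 2 * c) :=
        mul_le_mul_of_nonneg_left hbound (inv_nonneg.2 hc.le)
    _ = δ / 2 := by field_simp
    _ < δ := half_lt_self hδ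


end Stmt16Aux

open Stmt16Aux in
theorem stmt_16 (n : ℕ) (T : Set (EuclideanSpace ℝ (Fin n))) (hT : IsClosed T)
    (hTreg : RegularSet n T) (I : Finset (Fin n → ℕ)) (hIreg : RegularIdx n I)
    (ν : Measure (EuclideanSpace ℝ (Fin n))) (hνT : ν Tᶜ = 0)
    (hνmom : ∀ i : I, Integrable (mono n i) ν) :
    (∀ ε : ℝ, 0 < ε → ε < 1 →
      Integrable (nuEps n T ν ε) (volume.restrict T) ∧
      (∀ t, 0 ≤ nuEps n T ν ε t) ∧
      (∀ i : I, Integrable (fun t => |mono n i t| * nuEps n T ν ε t) (volume.restrict T))) ∧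
    (∀ i : I, Tendsto (fun ε : ℝ => ∫ t in T, mono n i t * nuEps n T ν ε t)
      (nhdsWithin 0 (Set.Ioi 0)) (nhds (∫ y, mono n i y ∂ν))) := by
  -- ν is a finite measure
  have hfin : IsFiniteMeasure ν := by
    obtain ⟨i₀, hi₀⟩ := hIreg.1
    have h0 : (fun _ => 0 : Fin n → ℕ) ∈ I := hIreg.2 i₀ hi₀ _ (fun k => Or.inl rfl)
    have h1 : Integrable (fun _ => (1:ℝ)) ν := by
      have := hνmom ⟨_, h0⟩
      have heq : mono n (fun _ => 0) = fun _ => (1:ℝ) := by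
        funext y; simp [mono]
      rwa [heq] at this
    rcases integrable_const_iff.1 h1 with h | h
    · exact absurd h one_ne_zero
    · exact h
  constructor
  · intro ε hε hε1
    refine ⟨integrable_nuEps hT hTreg hνT hε, fun t => nuEps_nonneg t, fun i =>
      integrable_absmono_nuEps hT hTreg hνT hε hε1.le hIreg hνmom i.2⟩
  · intro i
    have heq : ∀ᶠ ε in nhdsWithin (0:ℝ) (Set.Ioi 0),
        ∫ y, gE n T (i : Fin n → ℕ) ε y ∂ν = ∫ t in T, mono n i t * nuEps n T ν ε t := by
      filter_upwards [Ioo_mem_nhdsGT (show (0:ℝ) < 1 from one_pos)]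
        with ε hεI
      exact (integral_eq_gE hT hTreg hνT hεI.1 hεI.2.le hIreg hνmom i.2).symm
    apply Tendsto.congr' heq
    apply tendsto_integral_filter_of_dominated_convergence
      (bound := fun y => 2 ^ (∑ k, (i : Fin n → ℕ) k) * ∏ k, (1 + |y k| ^ (i : Fin n → ℕ) k))
    · exact Eventually.of_forall fun ε => (measurable_gE hT).aestronglyMeasurable
    · filter_upwards [Ioo_mem_nhdsGT
        (show (0:ℝ) < 1 from one_pos)] with ε hεI
      filter_upwards [ae_mem_T hνT] with y hy
      rw [Real.norm_eq_abs]
      exact gE_bound hT hTreg hεI.1 hεI.2.le hy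
    · exact (integrable_D hIreg hνmom i.2).const_mul _
    · filter_upwards [ae_mem_T hνT] with y hy
      exact gE_tendsto hT hTreg _ hy
end
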